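/- arXiv:1810.13316 — 8 statements merged into one kernel-verified Lean document; each statement's English description precedes it below -/
import Mathlib

section
/- Let X be a nonempty linear order which is unionwise indecomposable, i.e., for every subset Y ⊆ X, X order-embeds into Y or X order-embeds into X \ Y. Then for all natural numbers m ≥ 1 and n, and for every colouring c : X × Fin(m·n+1) → Fin m, there exist a colour i < m, a subset C ⊆ X into which X order-embeds, and a set D ⊆ {0, …, m·n} with |D| = n+1 such that c(x,d) = i for all x ∈ C and all d ∈ D. -/
/-- One column: any finite colouring of X is constant on a copy of X. -/
lemma one_col {X : Type*} [LinearOrder X] [Nonempty X]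
    (hX : ∀ Y : Set X, Nonempty (X ↪o ↥Y) ∨ Nonempty (X ↪o ↥(Yᶜ)))
    {m : ℕ} : ∀ (k : ℕ) (S : Finset (Fin m)) (f : X → Fin m), S.card = k →
      (∀ x, f x ∈ S) → ∃ i, ∃ g : X ↪o X, ∀ x, f (g x) = i := by
  intro k
  induction k with
  | zero =>
    intro S f hcard hf
    obtain ⟨x⟩ := ‹Nonempty X›
    have := hf x
    rw [Finset.card_eq_zero] at hcard
    simp [hcard] at this
  | succ k ih =>
    intro S f hcard hf
    have hne : S.Nonempty := Finset.card_pos.mp (by omega)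
    obtain ⟨i₀, hi₀⟩ := hne
    rcases hX {x | f x = i₀} with h | h <;> obtain ⟨e⟩ := h
    · exact ⟨i₀, e.trans (OrderEmbedding.subtype _), fun x => (e x).2⟩
    · have hmem : ∀ x, f (e x) ∈ S.erase i₀ := fun x =>
        Finset.mem_erase.mpr ⟨(e x).2, hf _⟩
      obtain ⟨i, g, hg⟩ := ih (S.erase i₀) (fun x => f ((e.trans (OrderEmbedding.subtype _)) x))
        (by rw [Finset.card_erase_of_mem hi₀, hcard]; omega) (fun x => hmem x)
      exact ⟨i, g.trans (e.trans (OrderEmbedding.subtype _)), hg⟩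

lemma many_cols {X : Type*} [LinearOrder X] [Nonempty X]
    (hX : ∀ Y : Set X, Nonempty (X ↪o ↥Y) ∨ Nonempty (X ↪o ↥(Yᶜ)))
    {m N : ℕ} (c : X → Fin N → Fin m) :
    ∀ L : List (Fin N), ∃ g : X ↪o X, ∀ d ∈ L, ∃ i, ∀ x, c (g x) d = i := by
  intro L
  induction L with
  | nil => exact ⟨OrderEmbedding.ofStrictMono id fun _ _ h => h, by simp⟩
  | cons d L ih =>
    obtain ⟨g, hg⟩ := ih
    obtain ⟨i, g', hg'⟩ := one_col hX (Finset.univ : Finset (Fin m)).card Finset.univ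
      (fun x => c (g x) d) rfl (fun _ => Finset.mem_univ _)
    refine ⟨g'.trans g, ?_⟩
    intro d' hd'
    rcases List.mem_cons.mp hd' with rfl | hd'
    · exact ⟨i, fun x => hg' x⟩
    · obtain ⟨j, hj⟩ := hg d' hd'
      exact ⟨j, fun x => hj (g' x)⟩

/-- For a nonempty unionwise indecomposable linear order `X`, natural numbers `m ≥ 1` and `n`:
`(φ; mn+1) → (φ; n+1)_m`. -/
theorem stmt_1 (X : Type*) [LinearOrder X] [Nonempty X]
    (hX : ∀ Y : Set X, Nonempty (X ↪o ↥Y) ∨ Nonempty (X ↪o ↥(Yᶜ)))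
    (m n : ℕ) (hm : 1 ≤ m) (c : X → Fin (m * n + 1) → Fin m) :
    ∃ (i : Fin m) (C : Set X) (D : Set (Fin (m * n + 1))),
      Nonempty (X ↪o ↥C) ∧ D.ncard = n + 1 ∧ ∀ x ∈ C, ∀ d ∈ D, c x d = i := by
  obtain ⟨g, hg⟩ := many_cols hX c (List.finRange (m * n + 1))
  have hg' : ∀ d : Fin (m * n + 1), ∃ i, ∀ x, c (g x) d = i :=
    fun d => hg d (List.mem_finRange d)
  choose I hI using hg'
  -- pigeonhole
  have hcard : (Finset.univ : Finset (Fin m)).card * n <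
      (Finset.univ : Finset (Fin (m * n + 1))).card := by
    simp
  obtain ⟨i, _, hi⟩ := Finset.exists_lt_card_fiber_of_mul_lt_card_of_maps_to
    (fun a _ => Finset.mem_univ (I a)) hcard
  obtain ⟨D, hDsub, hDcard⟩ := Finset.exists_subset_card_eq hi
  refine ⟨i, Set.range g, ↑D, ⟨OrderEmbedding.ofStrictMono
    (fun x => ⟨g x, Set.mem_range_self x⟩) (fun a b h => by
      simpa [Subtype.mk_lt_mk] using g.strictMono h)⟩, by simp [hDcard], ?_⟩
  rintro x ⟨y, rfl⟩ d hd
  have hdmem := hDsub hd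
  have : I d = i := (Finset.mem_filter.mp hdmem).2
  rw [hI d y, this]
end

section
/- Let R, T, F and P be linear orders. Suppose that for every colouring c of the two-element subsets of R with colours {0,1,2}, there is either a subset of R into which the lexicographic sum T + T order-embeds all of whose two-element subsets have colour 0, or a subset of R into which the lexicographic sum F + P order-embeds all of whose two-element subsets have colour 1, or a subset of R into which the lexicographic sum P + F order-embeds all of whose two-element subsets have colour 2 (i.e., the ordinary partition relation R → (2T, F+P, P+F)² holds). Then for every set E ⊆ R × R, either there exist subsets A, B ⊆ R, each admitting an order embedding of T, with A × B ⊆ (R × R) \ E, or there exist A ⊆ R admitting an order embedding of F and B ⊆ R admitting an order embedding of P with A × B ⊆ E. -/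
/-- Restrict the codomain of an order embedding to its range. -/
noncomputable def rangeRestrict {α β : Type*} [Preorder α] [Preorder β] (f : α ↪o β) :
    α ↪o ↥(Set.range f) where
  toFun a := ⟨f a, Set.mem_range_self a⟩
  inj' a b hab := f.injective (congrArg Subtype.val hab)
  map_rel_iff' := f.map_rel_iff

/-- Left inclusion into a lex sum as an order embedding. -/
def lexInl (α β : Type*) [Preorder α] [Preorder β] : α ↪o (α ⊕ₗ β) where
  toFun a := toLex (Sum.inl a)
  inj' a b hab := by simpa using hab
  map_rel_iff' := Sum.Lex.inl_le_inl_iff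

/-- Right inclusion into a lex sum as an order embedding. -/
def lexInr (α β : Type*) [Preorder α] [Preorder β] : β ↪o (α ⊕ₗ β) where
  toFun b := toLex (Sum.inr b)
  inj' a b hab := by simpa using hab
  map_rel_iff' := Sum.Lex.inr_le_inr_iff

/-- If the ordinary partition relation `R → (2T, F+P, P+F)²` holds, then the polarised
partition relation `(R;R) → (T F; T P)` holds. Colourings of two-element subsets are
rendered as functions on ordered pairs `x < y`. -/
theorem stmt_3 (R T F P : Type*) [LinearOrder R] [LinearOrder T] [LinearOrder F]
    [LinearOrder P]
    (h : ∀ c : R → R → Fin 3,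
      (∃ S : Set R, Nonempty ((T ⊕ₗ T) ↪o ↥S) ∧ ∀ x ∈ S, ∀ y ∈ S, x < y → c x y = 0) ∨
      (∃ S : Set R, Nonempty ((F ⊕ₗ P) ↪o ↥S) ∧ ∀ x ∈ S, ∀ y ∈ S, x < y → c x y = 1) ∨
      (∃ S : Set R, Nonempty ((P ⊕ₗ F) ↪o ↥S) ∧ ∀ x ∈ S, ∀ y ∈ S, x < y → c x y = 2)) :
    ∀ E : Set (R × R),
      (∃ A B : Set R, Nonempty (T ↪o ↥A) ∧ Nonempty (T ↪o ↥B) ∧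
        ∀ a ∈ A, ∀ b ∈ B, (a, b) ∉ E) ∨
      (∃ A B : Set R, Nonempty (F ↪o ↥A) ∧ Nonempty (P ↪o ↥B) ∧
        ∀ a ∈ A, ∀ b ∈ B, (a, b) ∈ E) := by
  intro E
  classical
  set c : R → R → Fin 3 := fun x y =>
    if (x, y) ∈ E then 1 else if (y, x) ∈ E then 2 else 0 with hc
  rcases h c with ⟨S, ⟨e⟩, hS⟩ | ⟨S, ⟨e⟩, hS⟩ | ⟨S, ⟨e⟩, hS⟩
  · -- colour 0 : take left and right copies of T
    left
    set f := ((lexInl T T).trans e).trans (OrderEmbedding.subtype S) with hf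
    set g := ((lexInr T T).trans e).trans (OrderEmbedding.subtype S) with hg
    refine ⟨Set.range f, Set.range g, ⟨rangeRestrict f⟩, ⟨rangeRestrict g⟩, ?_⟩
    rintro a ⟨t, rfl⟩ b ⟨t', rfl⟩
    have hlt : f t < g t' := by
      have : lexInl T T t < lexInr T T t' := Sum.Lex.inl_lt_inr t t'
      exact (OrderEmbedding.subtype S).strictMono (e.strictMono this)
    have hmem : f t ∈ S := (e (lexInl T T t)).2
    have hmem' : g t' ∈ S := (e (lexInr T T t')).2
    have := hS _ hmem _ hmem' hlt
    simp only [hc] at this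
    intro hE
    rw [if_pos hE] at this
    exact absurd this (by decide)
  · -- colour 1 : F before P, pairs in E
    right
    set f := ((lexInl F P).trans e).trans (OrderEmbedding.subtype S) with hf
    set g := ((lexInr F P).trans e).trans (OrderEmbedding.subtype S) with hg
    refine ⟨Set.range f, Set.range g, ⟨rangeRestrict f⟩, ⟨rangeRestrict g⟩, ?_⟩
    rintro a ⟨t, rfl⟩ b ⟨t', rfl⟩
    have hlt : f t < g t' :=
      (OrderEmbedding.subtype S).strictMono (e.strictMono (Sum.Lex.inl_lt_inr t t'))
    have := hS _ (e (lexInl F P t)).2 _ (e (lexInr F P t')).2 hlt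
    simp only [hc] at this
    by_contra hE
    split_ifs at this with h1 h2
    · exact hE h1
    · exact absurd this (by decide)
    · exact absurd this (by decide)
  · -- colour 2 : P before F, reversed pairs in E
    right
    set f := ((lexInr P F).trans e).trans (OrderEmbedding.subtype S) with hf
    set g := ((lexInl P F).trans e).trans (OrderEmbedding.subtype S) with hg
    refine ⟨Set.range f, Set.range g, ⟨rangeRestrict f⟩, ⟨rangeRestrict g⟩, ?_⟩
    rintro a ⟨t, rfl⟩ b ⟨t', rfl⟩
    have hlt : g t' < f t :=
      (OrderEmbedding.subtype S).strictMono (e.strictMono (Sum.Lex.inl_lt_inr t' t))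
    have := hS _ (e (lexInl P F t')).2 _ (e (lexInr P F t)).2 hlt
    simp only [hc] at this
    by_contra hE
    split_ifs at this with h1 h2
    · exact absurd this (by decide)
    · exact hE h2
    · exact absurd this (by decide)
end

section
/- For every natural number k and every colouring c : ℚ × ℚ → {0,1}, either there exist subsets C, D ⊆ ℚ, each admitting an order embedding of ℚ, with c constantly 0 on C × D, or there exist C, D ⊆ ℚ with |C| = |D| = k and c constantly 1 on C × D. -/
open Set

namespace Stmt4


/-- Portion of a set between two rationals. -/
abbrev Port (S : Set ℚ) (u v : ℚ) : Set ℚ := S ∩ Set.Ioo u v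

/-- `S` is nice: every nonempty portion is infinite. -/
def Nice (S : Set ℚ) : Prop := ∀ u v : ℚ, (Port S u v).Nonempty → (Port S u v).Infinite

/-- `A` is nowhere dense relative to `S`. -/
def Nwd (A S : Set ℚ) : Prop :=
  ∀ u v : ℚ, (Port S u v).Nonempty →
    ∃ u' v', Set.Ioo u' v' ⊆ Set.Ioo u v ∧ (Port S u' v').Nonempty ∧ Port S u' v' ∩ A = ∅

lemma port_port (S : Set ℚ) (u v u' v' : ℚ) :
    Port (Port S u v) u' v' = Port S (u ⊔ u') (v ⊓ v') := by
  show S ∩ Set.Ioo u v ∩ Set.Ioo u' v' = _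
  rw [inter_assoc, Set.Ioo_inter_Ioo]

lemma nice_univ : Nice (Set.univ : Set ℚ) := by
  intro u v h
  obtain ⟨x, -, hx⟩ := h
  have : (Set.Ioo u v).Infinite := Set.Ioo_infinite (lt_trans hx.1 hx.2)
  simpa [Port] using this

lemma nice_port {S : Set ℚ} (hS : Nice S) (u v : ℚ) : Nice (Port S u v) := by
  intro u' v' h
  rw [port_port] at h ⊢
  exact hS _ _ h

lemma nice_diff_finite {S : Set ℚ} (hS : Nice S) {F : Set ℚ} (hF : F.Finite) :
    Nice (S \ F) := by
  intro u v h
  have h2 : (Port S u v).Nonempty := h.mono (by intro x hx; exact ⟨hx.1.1, hx.2⟩)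
  have := (hS u v h2).diff hF
  refine this.mono ?_
  intro x hx
  exact ⟨⟨hx.1.1, hx.2⟩, hx.1.2⟩

lemma nice_infinite {S : Set ℚ} (hS : Nice S) (h : S.Nonempty) : S.Infinite := by
  obtain ⟨s, hs⟩ := h
  have : (Port S (s - 1) (s + 1)).Nonempty := ⟨s, hs, by constructor <;> linarith⟩
  exact ((hS _ _ this).mono (inter_subset_left))

lemma nwd_port {A S : Set ℚ} (h : Nwd A S) (u v : ℚ) : Nwd A (Port S u v) := by
  intro u₁ v₁ hne
  rw [port_port] at hne
  obtain ⟨u', v', hsub, hne', hdis⟩ := h _ _ hne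
  have hsub' : Set.Ioo u' v' ⊆ Set.Ioo u₁ v₁ := by
    intro x hx
    have h2 := hsub hx
    exact ⟨lt_of_le_of_lt le_sup_right h2.1, lt_of_lt_of_le h2.2 inf_le_right⟩
  have hsub'' : Set.Ioo u' v' ⊆ Set.Ioo u v := by
    intro x hx
    have h2 := hsub hx
    exact ⟨lt_of_le_of_lt le_sup_left h2.1, lt_of_lt_of_le h2.2 inf_le_left⟩
  refine ⟨u', v', hsub', ?_, ?_⟩
  · refine hne'.mono ?_
    intro x hx
    exact ⟨⟨hx.1, hsub'' hx.2⟩, hx.2⟩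
  · rw [← hdis]
    ext x
    constructor
    · rintro ⟨⟨⟨hxS, -⟩, hxI⟩, hxA⟩; exact ⟨⟨hxS, hxI⟩, hxA⟩
    · rintro ⟨⟨hxS, hxI⟩, hxA⟩; exact ⟨⟨⟨hxS, hsub'' hxI⟩, hxI⟩, hxA⟩

lemma nwd_empty (S : Set ℚ) : Nwd ∅ S := by
  intro u v h
  exact ⟨u, v, le_refl _, h, by simp⟩

lemma nwd_union {A B S : Set ℚ} (hA : Nwd A S) (hB : Nwd B S) : Nwd (A ∪ B) S := by
  intro u v h
  obtain ⟨u₁, v₁, hsub₁, hne₁, hdis₁⟩ := hA u v h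
  obtain ⟨u₂, v₂, hsub₂, hne₂, hdis₂⟩ := hB u₁ v₁ hne₁
  refine ⟨u₂, v₂, fun x hx => hsub₁ (hsub₂ hx), hne₂, ?_⟩
  ext x
  simp only [mem_inter_iff, mem_union, mem_empty_iff_false, iff_false, not_and, not_or]
  rintro ⟨hxS, hxI⟩
  constructor
  · intro hxA
    have : x ∈ Port S u₁ v₁ ∩ A := ⟨⟨hxS, hsub₂ hxI⟩, hxA⟩
    rw [hdis₁] at this; exact this
  · intro hxB
    have : x ∈ Port S u₂ v₂ ∩ B := ⟨⟨hxS, hxI⟩, hxB⟩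
    rw [hdis₂] at this; exact this

lemma nwd_iUnion_fin {S : Set ℚ} : ∀ {n : ℕ} (g : Fin n → Set ℚ),
    (∀ i, Nwd (g i) S) → Nwd (⋃ i, g i) S := by
  intro n
  induction n with
  | zero => intro g _; simpa using nwd_empty S
  | succ n ih =>
    intro g hg
    have : (⋃ i, g i) = (⋃ i : Fin n, g (Fin.castSucc i)) ∪ g (Fin.last n) := by
      ext x; simp only [mem_iUnion, mem_union]
      constructor
      · rintro ⟨i, hi⟩
        rcases Fin.lastCases (motive := fun j => x ∈ g j → (∃ i : Fin n, x ∈ g (Fin.castSucc i)) ∨ x ∈ g (Fin.last n)) (fun h => Or.inr h) (fun j h => Or.inl ⟨j, h⟩) i hi with h | h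
        · exact Or.inl h
        · exact Or.inr h
      · rintro (⟨i, hi⟩ | h)
        · exact ⟨_, hi⟩
        · exact ⟨_, h⟩
    rw [this]
    exact nwd_union (ih _ fun i => hg _) (hg _)

/-- Extract a strictly increasing chain of length n from an infinite set. -/
lemma exists_chain {P : Set ℚ} (h : P.Infinite) (n : ℕ) :
    ∃ g : Fin n → ℚ, StrictMono g ∧ ∀ i, g i ∈ P := by
  obtain ⟨t, htP, htc⟩ := h.exists_subset_card_eq n
  refine ⟨fun i => (t.orderIsoOfFin htc i : ℚ), ?_, fun i => htP (t.orderIsoOfFin htc i).2⟩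
  intro i j hij
  exact (t.orderIsoOfFin htc).strictMono hij

lemma exists_three {S : Set ℚ} (h : (Port S u v).Infinite) :
    ∃ p₀ p₁ p₂, p₀ ∈ Port S u v ∧ p₁ ∈ Port S u v ∧ p₂ ∈ Port S u v ∧ p₀ < p₁ ∧ p₁ < p₂ := by
  obtain ⟨g, hmono, hmem⟩ := exists_chain h 3
  exact ⟨g 0, g 1, g 2, hmem 0, hmem 1, hmem 2, hmono (by decide), hmono (by decide)⟩


lemma dense_inter_nice {T A : Set ℚ} (hT : Nice T) {u v : ℚ}
    (hne : (Port T u v).Nonempty)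
    (hd : ∀ u' v', Set.Ioo u' v' ⊆ Set.Ioo u v → (Port T u' v').Nonempty →
      (Port T u' v' ∩ A).Nonempty) :
    Nice (A ∩ Port T u v) ∧ (A ∩ Port T u v).Nonempty := by
  constructor
  · intro u₁ v₁ h₁
    obtain ⟨t, ht⟩ := h₁
    by_contra hfin
    rw [Set.not_infinite] at hfin
    set F : Set ℚ := Port (A ∩ Port T u v) u₁ v₁ with hF
    -- `t` is in `Port T (u ⊔ u₁) (v ⊓ v₁)` which is infinite
    have htP : t ∈ Port T (u ⊔ u₁) (v ⊓ v₁) := by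
      obtain ⟨⟨htA, htT, htuv⟩, htI⟩ := ht
      exact ⟨htT, ⟨sup_lt_iff.2 ⟨htuv.1, htI.1⟩, lt_inf_iff.2 ⟨htuv.2, htI.2⟩⟩⟩
    have hPinf : (Port T (u ⊔ u₁) (v ⊓ v₁)).Infinite := hT _ _ ⟨t, htP⟩
    set n : ℕ := hfin.toFinset.card with hn
    obtain ⟨g, hgmono, hgmem⟩ := exists_chain hPinf (2 * n + 3)
    -- for each i : Fin (n+1), pick z i in A between g (2i) and g (2i+2)
    have key : ∀ i : Fin (n + 1), ∃ z, z ∈ Port T (g ⟨2 * i.1, by omega⟩) (g ⟨2 * i.1 + 2, by omega⟩) ∩ A := by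
      intro i
      apply hd
      · intro x hx
        have h1 := (hgmem ⟨2 * i.1, by omega⟩).2
        have h2 := (hgmem ⟨2 * i.1 + 2, by omega⟩).2
        constructor
        · exact lt_trans (lt_of_le_of_lt le_sup_left h1.1) hx.1
        · exact lt_trans hx.2 (lt_of_lt_of_le h2.2 inf_le_left)
      · refine ⟨g ⟨2 * i.1 + 1, by omega⟩, (hgmem _).1, ?_, ?_⟩
        · exact hgmono (Fin.mk_lt_mk.2 (by omega))
        · exact hgmono (Fin.mk_lt_mk.2 (by omega))
    choose z hz using key
    have hzF : ∀ i, z i ∈ F := by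
      intro i
      obtain ⟨⟨hzT, hzI⟩, hzA⟩ := hz i
      have hlo := (hgmem ⟨2 * i.1, by omega⟩).2
      have hhi := (hgmem ⟨2 * i.1 + 2, by omega⟩).2
      refine ⟨⟨hzA, hzT, ?_, ?_⟩, ?_, ?_⟩
      · exact lt_trans (lt_of_le_of_lt le_sup_left hlo.1) hzI.1
      · exact lt_trans hzI.2 (lt_of_lt_of_le hhi.2 inf_le_left)
      · exact lt_trans (lt_of_le_of_lt le_sup_right hlo.1) hzI.1
      · exact lt_trans hzI.2 (lt_of_lt_of_le hhi.2 inf_le_right)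
    have hzinj : Function.Injective z := by
      have hmonoz : StrictMono z := by
        intro i j hij
        have h1 : z i < g ⟨2 * i.1 + 2, by omega⟩ := (hz i).1.2.2
        have h2 : g ⟨2 * j.1, by omega⟩ < z j := (hz j).1.2.1
        have h3 : (⟨2 * i.1 + 2, by omega⟩ : Fin (2*n+3)) ≤ ⟨2 * j.1, by omega⟩ := by
          simp [Fin.le_def]; omega
        exact lt_of_lt_of_le h1 (le_trans (hgmono.monotone h3) h2.le)
      exact hmonoz.injective
    -- contradiction with card
    have : (Finset.univ.image z).card = n + 1 := by
      rw [Finset.card_image_of_injective _ hzinj, Finset.card_univ, Fintype.card_fin]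
    have hsub : Finset.univ.image z ⊆ hfin.toFinset := by
      intro x hx
      simp only [Finset.mem_image] at hx
      obtain ⟨i, -, rfl⟩ := hx
      exact hfin.mem_toFinset.2 (hzF i)
    have := Finset.card_le_card hsub
    omega
  · obtain ⟨x, hx⟩ := hd u v (le_refl _) hne
    exact ⟨x, hx.2, hx.1⟩


lemma pick {S : Set ℚ} (hS : Nice S) {Safe : ℚ → Prop}
    (hsd : ∀ u v : ℚ, (Port S u v).Nonempty → ∃ a ∈ Port S u v, Safe a)
    {A : Set ℚ} (hA : Nwd A S) {α β : ℚ} (hne : (Port S α β).Nonempty) :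
    ∃ x, x ∈ Port S α β ∧ Safe x ∧ x ∉ A ∧ (Port S α x).Nonempty ∧ (Port S x β).Nonempty := by
  obtain ⟨u', v', hsub, hne', hdis⟩ := hA α β hne
  obtain ⟨p₀, p₁, p₂, hp₀, hp₁, hp₂, h01, h12⟩ := exists_three (hS u' v' hne')
  obtain ⟨x, hx, hxsafe⟩ := hsd p₀ p₂ ⟨p₁, hp₁.1, h01, h12⟩
  have hxuv : x ∈ Port S u' v' :=
    ⟨hx.1, lt_trans hp₀.2.1 hx.2.1, lt_trans hx.2.2 hp₂.2.2⟩
  have hxA : x ∉ A := by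
    intro hmem
    have : x ∈ Port S u' v' ∩ A := ⟨hxuv, hmem⟩
    rw [hdis] at this; exact this
  refine ⟨x, ⟨hx.1, hsub ⟨hxuv.2.1, hxuv.2.2⟩⟩, hxsafe, hxA, ?_, ?_⟩
  · exact ⟨p₀, hp₀.1, (hsub hp₀.2).1, hx.2.1⟩
  · exact ⟨p₂, hp₂.1, hx.2.2, (hsub hp₂.2).2⟩

lemma side_step {S : Set ℚ} {u₀ v₀ : ℚ} (hS : Nice S) (hSb : S ⊆ Set.Ioo u₀ v₀)
    {Safe : ℚ → Prop}
    (hsd : ∀ u v : ℚ, (Port S u v).Nonempty → ∃ a ∈ Port S u v, Safe a)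
    (e : ℕ → ℚ) {n : ℕ} (hinj : ∀ i : Fin n, e i.val ≠ e n) (g : Fin n → ℚ)
    (h6 : ∀ q : ℚ, ∃ x ∈ S, (∀ i : Fin n, e i.val < q → g i < x) ∧
      (∀ i : Fin n, q < e i.val → x < g i))
    {A : Set ℚ} (hA : Nwd A S) :
    ∃ x, x ∈ S ∧ Safe x ∧ x ∉ A ∧
      (∀ i : Fin n, e i.val < e n → g i < x) ∧ (∀ i : Fin n, e n < e i.val → x < g i) ∧
      (∀ q' : ℚ, ∃ x' ∈ S, (∀ i : Fin n, e i.val < q' → g i < x') ∧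
        (∀ i : Fin n, q' < e i.val → x' < g i) ∧
        (e n < q' → x < x') ∧ (q' < e n → x' < x)) := by
  classical
  set lows : Finset ℚ :=
    (Finset.univ.filter fun i : Fin n => e i.val < e n).image g with hlows
  set highs : Finset ℚ :=
    (Finset.univ.filter fun i : Fin n => e n < e i.val).image g with hhighs
  set α : ℚ := (insert u₀ lows).max' (Finset.insert_nonempty _ _) with hα
  set β : ℚ := (insert v₀ highs).min' (Finset.insert_nonempty _ _) with hβ
  have hle : ∀ i : Fin n, e i.val < e n → g i ≤ α := by
    intro i hi
    exact Finset.le_max' _ _ (Finset.mem_insert_of_mem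
      (Finset.mem_image.2 ⟨i, Finset.mem_filter.2 ⟨Finset.mem_univ _, hi⟩, rfl⟩))
  have hge : ∀ i : Fin n, e n < e i.val → β ≤ g i := by
    intro i hi
    exact Finset.min'_le _ _ (Finset.mem_insert_of_mem
      (Finset.mem_image.2 ⟨i, Finset.mem_filter.2 ⟨Finset.mem_univ _, hi⟩, rfl⟩))
  have hαlt : ∀ x ∈ S, (∀ i : Fin n, e i.val < e n → g i < x) → α < x := by
    intro x hxS hx
    rw [hα, Finset.max'_lt_iff]
    intro w hw
    rcases Finset.mem_insert.1 hw with rfl | hw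
    · exact (hSb hxS).1
    · obtain ⟨i, hi, rfl⟩ := Finset.mem_image.1 hw
      exact hx i (Finset.mem_filter.1 hi).2
  have hβgt : ∀ x ∈ S, (∀ i : Fin n, e n < e i.val → x < g i) → x < β := by
    intro x hxS hx
    rw [hβ, Finset.lt_min'_iff]
    intro w hw
    rcases Finset.mem_insert.1 hw with rfl | hw
    · exact (hSb hxS).2
    · obtain ⟨i, hi, rfl⟩ := Finset.mem_image.1 hw
      exact hx i (Finset.mem_filter.1 hi).2
  have hgap : (Port S α β).Nonempty := by
    obtain ⟨x₀, hx₀S, c₁, c₂⟩ := h6 (e n)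
    exact ⟨x₀, hx₀S, hαlt x₀ hx₀S c₁, hβgt x₀ hx₀S c₂⟩
  obtain ⟨x, hx, hsafe, hxA, hgl, hgr⟩ := pick hS hsd hA hgap
  have hxlow : ∀ i : Fin n, e i.val < e n → g i < x :=
    fun i hi => lt_of_le_of_lt (hle i hi) hx.2.1
  have hxhigh : ∀ i : Fin n, e n < e i.val → x < g i :=
    fun i hi => lt_of_lt_of_le hx.2.2 (hge i hi)
  refine ⟨x, hx.1, hsafe, hxA, hxlow, hxhigh, ?_⟩
  intro q'
  rcases lt_trichotomy q' (e n) with hq | hq | hq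
  · by_cases hEx : ∃ i : Fin n, q' < e i.val ∧ e i.val < e n
    · obtain ⟨i₀, hi₀1, hi₀2⟩ := hEx
      obtain ⟨x₀, hx₀S, c₁, c₂⟩ := h6 q'
      refine ⟨x₀, hx₀S, c₁, c₂, fun h => absurd h (not_lt.2 hq.le), fun _ => ?_⟩
      exact lt_trans (lt_of_lt_of_le (c₂ i₀ hi₀1) (hle i₀ hi₀2)) hx.2.1
    · push_neg at hEx
      obtain ⟨x₁, hx₁⟩ := hgl
      refine ⟨x₁, hx₁.1, ?_, ?_, fun h => absurd h (not_lt.2 hq.le), fun _ => hx₁.2.2⟩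
      · intro i hi
        exact lt_of_le_of_lt (hle i (lt_trans hi hq)) hx₁.2.1
      · intro i hi
        have : e n < e i.val := (hEx i hi).lt_of_ne fun h => hinj i h.symm
        exact lt_of_lt_of_le (lt_trans hx₁.2.2 hx.2.2) (hge i this)
  · refine ⟨x, hx.1, ?_, ?_, fun h => absurd h (by rw [hq]; exact lt_irrefl _),
      fun h => absurd h (by rw [hq]; exact lt_irrefl _)⟩
    · intro i hi; exact hxlow i (hq ▸ hi)
    · intro i hi; exact hxhigh i (hq ▸ hi)
  · by_cases hEx : ∃ i : Fin n, e n < e i.val ∧ e i.val < q'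
    · obtain ⟨i₀, hi₀1, hi₀2⟩ := hEx
      obtain ⟨x₀, hx₀S, c₁, c₂⟩ := h6 q'
      refine ⟨x₀, hx₀S, c₁, c₂, fun _ => ?_, fun h => absurd h (not_lt.2 hq.le)⟩
      exact lt_trans hx.2.2 (lt_of_le_of_lt (hge i₀ hi₀1) (c₁ i₀ hi₀2))
    · push_neg at hEx
      obtain ⟨x₂, hx₂⟩ := hgr
      refine ⟨x₂, hx₂.1, ?_, ?_, fun _ => hx₂.2.1, fun h => absurd h (not_lt.2 hq.le)⟩
      · intro i hi
        have : e i.val < e n := by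
          rcases lt_trichotomy (e i.val) (e n) with h | h | h
          · exact h
          · exact absurd h (hinj i)
          · exact absurd hi (not_lt.2 (hEx i h))
        exact lt_trans (lt_of_le_of_lt (hle i this) hx.2.1) hx₂.2.1
      · intro i hi
        exact lt_of_lt_of_le hx₂.2.2 (hge i (lt_trans hq hi))


variable (c : ℚ → ℚ → Fin 2)

def SafePair (S T : Set ℚ) : Prop :=
  (∀ u v : ℚ, (Port S u v).Nonempty → ∃ a ∈ Port S u v, Nwd {y | c a y = 1} T) ∧
  (∀ u v : ℚ, (Port T u v).Nonempty → ∃ b ∈ Port T u v, Nwd {x | c x b = 1} S)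

lemma grow (H : ∀ S T : Set ℚ, Nice S → S.Nonempty → Nice T → T.Nonempty → ¬ SafePair c S T) :
    ∀ m : ℕ, ∃ (A B : Finset ℚ) (S T : Set ℚ),
      A.card + B.card = m ∧ Nice S ∧ S.Nonempty ∧ Nice T ∧ T.Nonempty ∧
      (∀ a ∈ A, ∀ y ∈ T, c a y = 1) ∧ (∀ x ∈ S, ∀ b ∈ B, c x b = 1) ∧
      (∀ a ∈ A, ∀ b ∈ B, c a b = 1) ∧ (↑A ∩ S = ∅) ∧ (↑B ∩ T = ∅) := by
  intro m
  induction m with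
  | zero =>
    exact ⟨∅, ∅, Set.univ, Set.univ, by simp, nice_univ, ⟨0, trivial⟩, nice_univ, ⟨0, trivial⟩,
      by simp, by simp, by simp, by simp, by simp⟩
  | succ m ih =>
    obtain ⟨A, B, S, T, hcard, hSn, hSne, hTn, hTne, hAT, hSB, hAB, hAS, hBT⟩ := ih
    have hnot := H S T hSn hSne hTn hTne
    rw [SafePair, not_and_or] at hnot
    rcases hnot with hrow | hcol
    · push_neg at hrow
      obtain ⟨u, v, hne, hbad⟩ := hrow
      obtain ⟨a, ha⟩ := hne
      have hnN := hbad a ha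
      rw [Nwd] at hnN
      push_neg at hnN
      obtain ⟨u₁, v₁, hne₁, hdense⟩ := hnN
      obtain ⟨hTn', hTne'⟩ := dense_inter_nice hTn hne₁ hdense
      refine ⟨insert a A, B, S \ {a}, {y | c a y = 1} ∩ Port T u₁ v₁, ?_, ?_, ?_, hTn', hTne',
        ?_, ?_, ?_, ?_, ?_⟩
      · rw [Finset.card_insert_of_notMem, ← hcard]; · ring
        intro hmem
        have : a ∈ (↑A : Set ℚ) ∩ S := ⟨hmem, ha.1⟩
        rw [hAS] at this; exact this
      · exact nice_diff_finite hSn (Set.finite_singleton a)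
      · have : S.Infinite := nice_infinite hSn hSne
        exact (this.diff (Set.finite_singleton a)).nonempty
      · intro a' ha' y hy
        rcases Finset.mem_insert.1 ha' with rfl | ha'
        · exact hy.1
        · exact hAT a' ha' y (hy.2.1)
      · intro x hx b hb; exact hSB x hx.1 b hb
      · intro a' ha' b hb
        rcases Finset.mem_insert.1 ha' with rfl | ha'
        · exact hSB a' ha.1 b hb
        · exact hAB a' ha' b hb
      · apply Set.eq_empty_iff_forall_notMem.2
        rintro x ⟨hx1, hxS, hxa⟩
        rcases Finset.mem_insert.1 (Finset.mem_coe.1 hx1) with rfl | hx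
        · exact hxa rfl
        · have : x ∈ (↑A : Set ℚ) ∩ S := ⟨hx, hxS⟩
          rw [hAS] at this; exact this
      · apply Set.eq_empty_iff_forall_notMem.2
        rintro y ⟨hy1, -, hy2, -⟩
        have : y ∈ (↑B : Set ℚ) ∩ T := ⟨hy1, hy2⟩
        rw [hBT] at this; exact this
    · push_neg at hcol
      obtain ⟨u, v, hne, hbad⟩ := hcol
      obtain ⟨b, hb⟩ := hne
      have hnN := hbad b hb
      rw [Nwd] at hnN
      push_neg at hnN
      obtain ⟨u₁, v₁, hne₁, hdense⟩ := hnN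
      obtain ⟨hSn', hSne'⟩ := dense_inter_nice hSn hne₁ hdense
      refine ⟨A, insert b B, {x | c x b = 1} ∩ Port S u₁ v₁, T \ {b}, ?_, hSn', hSne',
        ?_, ?_, ?_, ?_, ?_, ?_, ?_⟩
      · rw [Finset.card_insert_of_notMem, ← hcard]; · ring
        intro hmem
        have : b ∈ (↑B : Set ℚ) ∩ T := ⟨hmem, hb.1⟩
        rw [hBT] at this; exact this
      · exact nice_diff_finite hTn (Set.finite_singleton b)
      · have : T.Infinite := nice_infinite hTn hTne
        exact (this.diff (Set.finite_singleton b)).nonempty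
      · intro a ha y hy; exact hAT a ha y hy.1
      · intro x hx b' hb'
        rcases Finset.mem_insert.1 hb' with rfl | hb'
        · exact hx.1
        · exact hSB x hx.2.1 b' hb'
      · intro a ha b' hb'
        rcases Finset.mem_insert.1 hb' with rfl | hb'
        · exact hAT a ha b' hb.1
        · exact hAB a ha b' hb'
      · apply Set.eq_empty_iff_forall_notMem.2
        rintro x ⟨hx1, -, hx2, -⟩
        have : x ∈ (↑A : Set ℚ) ∩ S := ⟨hx1, hx2⟩
        rw [hAS] at this; exact this
      · apply Set.eq_empty_iff_forall_notMem.2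
        rintro y ⟨hy1, hyT, hyb⟩
        rcases Finset.mem_insert.1 (Finset.mem_coe.1 hy1) with rfl | hy
        · exact hyb rfl
        · have : y ∈ (↑B : Set ℚ) ∩ T := ⟨hy, hyT⟩
          rw [hBT] at this; exact this

def Inv (c : ℚ → ℚ → Fin 2) (S T : Set ℚ) (e : ℕ → ℚ) (n : ℕ) (f : Fin n → ℚ × ℚ) : Prop :=
  (∀ i j : Fin n, e i.val < e j.val → (f i).1 < (f j).1) ∧
  (∀ i j : Fin n, e i.val < e j.val → (f i).2 < (f j).2) ∧
  (∀ i : Fin n, (f i).1 ∈ S ∧ Nwd {y | c (f i).1 y = 1} T) ∧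
  (∀ i : Fin n, (f i).2 ∈ T ∧ Nwd {x | c x (f i).2 = 1} S) ∧
  (∀ i j : Fin n, c (f i).1 (f j).2 = 0) ∧
  (∀ q : ℚ, ∃ x ∈ S, (∀ i : Fin n, e i.val < q → (f i).1 < x) ∧
    (∀ i : Fin n, q < e i.val → x < (f i).1)) ∧
  (∀ q : ℚ, ∃ y ∈ T, (∀ i : Fin n, e i.val < q → (f i).2 < y) ∧
    (∀ i : Fin n, q < e i.val → y < (f i).2))

lemma fin2_eq_zero {a : Fin 2} (h : a ≠ 1) : a = 0 := by omega

lemma inv_extend {c : ℚ → ℚ → Fin 2} {S T : Set ℚ} {u₀ v₀ w₀ z₀ : ℚ}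
    (hS : Nice S) (hSb : S ⊆ Set.Ioo u₀ v₀) (hT : Nice T) (hTb : T ⊆ Set.Ioo w₀ z₀)
    (hsd : ∀ u v : ℚ, (Port S u v).Nonempty → ∃ a ∈ Port S u v, Nwd {y | c a y = 1} T)
    (htd : ∀ u v : ℚ, (Port T u v).Nonempty → ∃ b ∈ Port T u v, Nwd {x | c x b = 1} S)
    {e : ℕ → ℚ} (he : Function.Injective e)
    {n : ℕ} {f : Fin n → ℚ × ℚ} (hf : Inv c S T e n f) :
    ∃ p, Inv c S T e (n + 1) (Fin.snoc f p) := by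
  obtain ⟨i1, i2, i3, i4, i5, i6, i7⟩ := hf
  have hinj : ∀ i : Fin n, e i.val ≠ e n := by
    intro i h
    have := he h
    omega
  have hA : Nwd (⋃ i : Fin n, {x | c x (f i).2 = 1}) S :=
    nwd_iUnion_fin _ fun i => (i4 i).2
  obtain ⟨x, hxS, hxsafe, hxA, hxlow, hxhigh, hx6⟩ :=
    side_step hS hSb hsd e hinj (fun i => (f i).1) i6 hA
  have hB : Nwd ((⋃ i : Fin n, {y | c (f i).1 y = 1}) ∪ {y | c x y = 1}) T :=
    nwd_union (nwd_iUnion_fin _ fun i => (i3 i).2) hxsafe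
  obtain ⟨y, hyT, hysafe, hyB, hylow, hyhigh, hy7⟩ :=
    side_step hT hTb htd e hinj (fun i => (f i).2) i7 hB
  have hyB1 : ∀ i : Fin n, c (f i).1 y = 0 := by
    intro i
    refine fin2_eq_zero fun h => hyB (Or.inl (mem_iUnion.2 ⟨i, h⟩))
  have hyB2 : c x y = 0 := fin2_eq_zero fun h => hyB (Or.inr h)
  have hxA1 : ∀ i : Fin n, c x (f i).2 = 0 := by
    intro i
    refine fin2_eq_zero fun h => hxA (mem_iUnion.2 ⟨i, h⟩)
  refine ⟨(x, y), ?_, ?_, ?_, ?_, ?_, ?_, ?_⟩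
  · intro i j hij
    rcases Fin.eq_castSucc_or_eq_last i with ⟨i', rfl⟩ | rfl <;>
      rcases Fin.eq_castSucc_or_eq_last j with ⟨j', rfl⟩ | rfl <;>
      simp only [Fin.snoc_castSucc, Fin.snoc_last, Fin.coe_castSucc, Fin.val_last] at *
    · exact i1 i' j' hij
    · exact hxlow i' hij
    · exact hxhigh j' hij
    · exact absurd hij (lt_irrefl _)
  · intro i j hij
    rcases Fin.eq_castSucc_or_eq_last i with ⟨i', rfl⟩ | rfl <;>
      rcases Fin.eq_castSucc_or_eq_last j with ⟨j', rfl⟩ | rfl <;>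
      simp only [Fin.snoc_castSucc, Fin.snoc_last, Fin.coe_castSucc, Fin.val_last] at *
    · exact i2 i' j' hij
    · exact hylow i' hij
    · exact hyhigh j' hij
    · exact absurd hij (lt_irrefl _)
  · intro i
    rcases Fin.eq_castSucc_or_eq_last i with ⟨i', rfl⟩ | rfl <;>
      simp only [Fin.snoc_castSucc, Fin.snoc_last]
    · exact i3 i'
    · exact ⟨hxS, hxsafe⟩
  · intro i
    rcases Fin.eq_castSucc_or_eq_last i with ⟨i', rfl⟩ | rfl <;>
      simp only [Fin.snoc_castSucc, Fin.snoc_last]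
    · exact i4 i'
    · exact ⟨hyT, hysafe⟩
  · intro i j
    rcases Fin.eq_castSucc_or_eq_last i with ⟨i', rfl⟩ | rfl <;>
      rcases Fin.eq_castSucc_or_eq_last j with ⟨j', rfl⟩ | rfl <;>
      simp only [Fin.snoc_castSucc, Fin.snoc_last]
    · exact i5 i' j'
    · exact hyB1 i'
    · exact hxA1 j'
    · exact hyB2
  · intro q'
    obtain ⟨x', hx'S, c₁, c₂, c₃, c₄⟩ := hx6 q'
    refine ⟨x', hx'S, ?_, ?_⟩
    · intro i hi
      rcases Fin.eq_castSucc_or_eq_last i with ⟨i', rfl⟩ | rfl <;>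
        simp only [Fin.snoc_castSucc, Fin.snoc_last, Fin.coe_castSucc, Fin.val_last] at *
      · exact c₁ i' hi
      · exact c₃ hi
    · intro i hi
      rcases Fin.eq_castSucc_or_eq_last i with ⟨i', rfl⟩ | rfl <;>
        simp only [Fin.snoc_castSucc, Fin.snoc_last, Fin.coe_castSucc, Fin.val_last] at *
      · exact c₂ i' hi
      · exact c₄ hi
  · intro q'
    obtain ⟨y', hy'T, c₁, c₂, c₃, c₄⟩ := hy7 q'
    refine ⟨y', hy'T, ?_, ?_⟩
    · intro i hi
      rcases Fin.eq_castSucc_or_eq_last i with ⟨i', rfl⟩ | rfl <;>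
        simp only [Fin.snoc_castSucc, Fin.snoc_last, Fin.coe_castSucc, Fin.val_last] at *
      · exact c₁ i' hi
      · exact c₃ hi
    · intro i hi
      rcases Fin.eq_castSucc_or_eq_last i with ⟨i', rfl⟩ | rfl <;>
        simp only [Fin.snoc_castSucc, Fin.snoc_last, Fin.coe_castSucc, Fin.val_last] at *
      · exact c₂ i' hi
      · exact c₄ hi

noncomputable def seqF (c : ℚ → ℚ → Fin 2) (S T : Set ℚ) (e : ℕ → ℚ)
    (step : ∀ n (f : Fin n → ℚ × ℚ), Inv c S T e n f →
      {p : ℚ × ℚ // Inv c S T e (n + 1) (Fin.snoc f p)})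
    (base : Inv c S T e 0 (fun i => i.elim0)) :
    ∀ n, {f : Fin n → ℚ × ℚ // Inv c S T e n f}
  | 0 => ⟨fun i => i.elim0, base⟩
  | n + 1 =>
    let prev := seqF c S T e step base n
    ⟨Fin.snoc prev.1 (step n prev.1 prev.2).1, (step n prev.1 prev.2).2⟩

lemma exists_embed {c : ℚ → ℚ → Fin 2} {S T : Set ℚ} {u₀ v₀ w₀ z₀ : ℚ}
    (hS : Nice S) (hSb : S ⊆ Set.Ioo u₀ v₀) (hSne : S.Nonempty)
    (hT : Nice T) (hTb : T ⊆ Set.Ioo w₀ z₀) (hTne : T.Nonempty)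
    (hsd : ∀ u v : ℚ, (Port S u v).Nonempty → ∃ a ∈ Port S u v, Nwd {y | c a y = 1} T)
    (htd : ∀ u v : ℚ, (Port T u v).Nonempty → ∃ b ∈ Port T u v, Nwd {x | c x b = 1} S) :
    ∃ f g : ℚ → ℚ, StrictMono f ∧ StrictMono g ∧ ∀ p q, c (f p) (g q) = 0 := by
  classical
  set e : ℕ → ℚ := fun n => (Denumerable.eqv ℚ).symm n with he_def
  have he : Function.Injective e := (Denumerable.eqv ℚ).symm.injective
  have base : Inv c S T e 0 (fun i => i.elim0) := by
    refine ⟨fun i => i.elim0, fun i => i.elim0, fun i => i.elim0, fun i => i.elim0,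
      fun i => i.elim0, ?_, ?_⟩
    · intro q
      exact ⟨hSne.some, hSne.some_mem, fun i => i.elim0, fun i => i.elim0⟩
    · intro q
      exact ⟨hTne.some, hTne.some_mem, fun i => i.elim0, fun i => i.elim0⟩
  set step : ∀ n (f : Fin n → ℚ × ℚ), Inv c S T e n f →
      {p : ℚ × ℚ // Inv c S T e (n + 1) (Fin.snoc f p)} :=
    fun n f hf => ⟨Classical.choose (inv_extend hS hSb hT hTb hsd htd he hf),
      Classical.choose_spec (inv_extend hS hSb hT hTb hsd htd he hf)⟩ with hstep
  set Q := seqF c S T e step base with hQ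
  set F : ℕ → ℚ × ℚ := fun n => (Q (n + 1)).1 (Fin.last n) with hF
  have coh : ∀ n (i : Fin n), (Q n).1 i = F i.val := by
    intro n
    induction n with
    | zero => exact fun i => i.elim0
    | succ n ih =>
      intro i
      rcases Fin.eq_castSucc_or_eq_last i with ⟨i', rfl⟩ | rfl
      · have h1 : (Q (n + 1)).1 (Fin.castSucc i') = (Q n).1 i' := by
          show (seqF c S T e step base (n+1)).1 (Fin.castSucc i') = _
          simp [seqF]; rfl
        rw [h1, ih i']
        rfl
      · rfl
  -- key facts at any finite stage
  have key1 : ∀ m n : ℕ, e m < e n → (F m).1 < (F n).1 := by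
    intro m n hmn
    set N := max m n + 1 with hN
    have hm : m < N := by omega
    have hn : n < N := by omega
    have := ((Q N).2.1 ⟨m, hm⟩ ⟨n, hn⟩) hmn
    rwa [coh N ⟨m, hm⟩, coh N ⟨n, hn⟩] at this
  have key2 : ∀ m n : ℕ, e m < e n → (F m).2 < (F n).2 := by
    intro m n hmn
    set N := max m n + 1 with hN
    have hm : m < N := by omega
    have hn : n < N := by omega
    have := ((Q N).2.2.1 ⟨m, hm⟩ ⟨n, hn⟩) hmn
    rwa [coh N ⟨m, hm⟩, coh N ⟨n, hn⟩] at this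
  have key5 : ∀ m n : ℕ, c (F m).1 (F n).2 = 0 := by
    intro m n
    set N := max m n + 1 with hN
    have hm : m < N := by omega
    have hn : n < N := by omega
    have := (Q N).2.2.2.2.2.1 ⟨m, hm⟩ ⟨n, hn⟩
    rwa [coh N ⟨m, hm⟩, coh N ⟨n, hn⟩] at this
  set idx : ℚ → ℕ := fun q => Denumerable.eqv ℚ q with hidx
  have heidx : ∀ q, e (idx q) = q := fun q => (Denumerable.eqv ℚ).symm_apply_apply q
  refine ⟨fun q => (F (idx q)).1, fun q => (F (idx q)).2, ?_, ?_, ?_⟩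
  · intro p q hpq
    exact key1 _ _ (by rw [heidx, heidx]; exact hpq)
  · intro p q hpq
    exact key2 _ _ (by rw [heidx, heidx]; exact hpq)
  · intro p q
    exact key5 _ _

end Stmt4

/-- The polarised partition relation `(η;η) → (η k; η k)` for every natural number `k`. -/
theorem stmt_4 (k : ℕ) (c : ℚ → ℚ → Fin 2) :
    (∃ C D : Set ℚ, Nonempty (ℚ ↪o ↥C) ∧ Nonempty (ℚ ↪o ↥D) ∧
      ∀ x ∈ C, ∀ y ∈ D, c x y = 0) ∨
    (∃ C D : Set ℚ, C.ncard = k ∧ D.ncard = k ∧ ∀ x ∈ C, ∀ y ∈ D, c x y = 1) := by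
  classical
  open Stmt4 in
  by_cases H : ∃ S T : Set ℚ, Stmt4.Nice S ∧ S.Nonempty ∧ Stmt4.Nice T ∧ T.Nonempty ∧
      Stmt4.SafePair c S T
  · left
    obtain ⟨S, T, hSn, hSne, hTn, hTne, hrow, hcol⟩ := H
    obtain ⟨s, hs⟩ := hSne
    obtain ⟨t, ht⟩ := hTne
    set S₀ : Set ℚ := Stmt4.Port S (s - 1) (s + 1) with hS₀
    set T₀ : Set ℚ := Stmt4.Port T (t - 1) (t + 1) with hT₀
    have hS₀n : Stmt4.Nice S₀ := Stmt4.nice_port hSn _ _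
    have hT₀n : Stmt4.Nice T₀ := Stmt4.nice_port hTn _ _
    have hS₀ne : S₀.Nonempty := ⟨s, hs, by constructor <;> linarith⟩
    have hT₀ne : T₀.Nonempty := ⟨t, ht, by constructor <;> linarith⟩
    have hS₀b : S₀ ⊆ Set.Ioo (s - 1) (s + 1) := Set.inter_subset_right
    have hT₀b : T₀ ⊆ Set.Ioo (t - 1) (t + 1) := Set.inter_subset_right
    have hsd : ∀ u v : ℚ, (Stmt4.Port S₀ u v).Nonempty →
        ∃ a ∈ Stmt4.Port S₀ u v, Stmt4.Nwd {y | c a y = 1} T₀ := by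
      intro u v hne
      rw [hS₀, Stmt4.port_port] at hne ⊢
      obtain ⟨a, ha, hsafe⟩ := hrow _ _ hne
      exact ⟨a, ha, Stmt4.nwd_port hsafe _ _⟩
    have htd : ∀ u v : ℚ, (Stmt4.Port T₀ u v).Nonempty →
        ∃ b ∈ Stmt4.Port T₀ u v, Stmt4.Nwd {x | c x b = 1} S₀ := by
      intro u v hne
      rw [hT₀, Stmt4.port_port] at hne ⊢
      obtain ⟨b, hb, hsafe⟩ := hcol _ _ hne
      exact ⟨b, hb, Stmt4.nwd_port hsafe _ _⟩
    obtain ⟨f, g, hf, hg, hfg⟩ :=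
      Stmt4.exists_embed hS₀n hS₀b hS₀ne hT₀n hT₀b hT₀ne hsd htd
    refine ⟨Set.range f, Set.range g, ⟨?_⟩, ⟨?_⟩, ?_⟩
    · exact OrderEmbedding.ofStrictMono (fun q => ⟨f q, Set.mem_range_self q⟩)
        (fun a b hab => Subtype.mk_lt_mk.2 (hf hab))
    · exact OrderEmbedding.ofStrictMono (fun q => ⟨g q, Set.mem_range_self q⟩)
        (fun a b hab => Subtype.mk_lt_mk.2 (hg hab))
    · rintro x ⟨p, rfl⟩ y ⟨q, rfl⟩
      exact hfg p q
  · right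
    push_neg at H
    rcases Nat.eq_zero_or_pos k with rfl | hk
    · exact ⟨∅, ∅, by simp, by simp, by simp⟩
    have H' : ∀ S T : Set ℚ, Stmt4.Nice S → S.Nonempty → Stmt4.Nice T → T.Nonempty →
        ¬ Stmt4.SafePair c S T := by
      intro S T h1 h2 h3 h4
      exact H S T h1 h2 h3 h4
    obtain ⟨A, B, S, T, hcard, hSn, hSne, hTn, hTne, hAT, hSB, hAB, hAS, hBT⟩ :=
      Stmt4.grow c H' (2 * k - 1)
    rcases le_or_gt k A.card with hA | hA
    · obtain ⟨A', hA'sub, hA'card⟩ := Finset.exists_subset_card_eq hA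
      obtain ⟨D', hD'sub, hD'card⟩ :=
        (Stmt4.nice_infinite hTn hTne).exists_subset_card_eq k
      refine ⟨↑A', ↑D', by rw [Set.ncard_coe_finset, hA'card], by rw [Set.ncard_coe_finset, hD'card], ?_⟩
      intro x hx y hy
      exact hAT x (hA'sub hx) y (hD'sub hy)
    · have hB : k ≤ B.card := by omega
      obtain ⟨B', hB'sub, hB'card⟩ := Finset.exists_subset_card_eq hB
      obtain ⟨C', hC'sub, hC'card⟩ :=
        (Stmt4.nice_infinite hSn hSne).exists_subset_card_eq k
      refine ⟨↑C', ↑B', by rw [Set.ncard_coe_finset, hC'card], by rw [Set.ncard_coe_finset, hB'card], ?_⟩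
      intro x hx y hy
      exact hSB x (hC'sub hx) y (hB'sub hy)
end

section
/- For every natural number k: (a) for every colouring c : ℚ × ℕ → {0,1}, either there exist a subset C ⊆ ℚ admitting an order embedding of ℚ and an infinite set D ⊆ ℕ with c constantly 0 on C × D, or there exist C ⊆ ℚ and D ⊆ ℕ with |C| = |D| = k and c constantly 1 on C × D; and (b) for every colouring c : W × ℕ → {0,1}, where W is the set of ordinals below ω^ω, either there exist C ⊆ W of order type ω^ω and an infinite D ⊆ ℕ with c constantly 0 on C × D, or there exist C ⊆ W and D ⊆ ℕ with |C| = |D| = k and c constantly 1 on C × D. -/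
open Ordinal Set


lemma fin2_one (x : Fin 2) (h : x ≠ 0) : x = 1 := by fin_cases x <;> simp_all

lemma core_lemma {ρ : Type*} (k : ℕ) (hk : 0 < k) (c : ρ → ℕ → Fin 2)
    (H : ¬ ∃ (C : Set ρ) (D : Set ℕ), C.ncard = k ∧ D.ncard = k ∧
      ∀ x ∈ C, ∀ d ∈ D, c x d = 1) :
    ∃ (Y : Set ρ), Y.Finite ∧ ∃ P : Fin (k+1) → Set ℕ,
      (∀ i, (P i).Infinite) ∧ ∀ q, q ∉ Y → ∃ i, ∀ n ∈ P i, c q n = 0 := by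
  classical
  set A : ρ → Set ℕ := fun q => {n | c q n = 1} with hA
  have D2 : ∀ S : Finset ℕ, S.card = k → {q : ρ | ∀ n ∈ S, c q n = 1}.Finite := by
    intro S hS
    by_contra hinf
    replace hinf : Set.Infinite _ := hinf
    obtain ⟨T, hTsub, hTcard⟩ := hinf.exists_subset_card_eq k
    exact H ⟨↑T, ↑S, by simp [hTcard], by simp [hS],
      fun x hx d hd => (hTsub hx) d hd⟩
  have D1 : ∀ S : Finset ρ, S.card = k → {n : ℕ | ∀ q ∈ S, c q n = 1}.Finite := by
    intro S hS
    by_contra hinf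
    replace hinf : Set.Infinite _ := hinf
    obtain ⟨T, hTsub, hTcard⟩ := hinf.exists_subset_card_eq k
    exact H ⟨↑S, ↑T, by simp [hS], by simp [hTcard],
      fun x hx d hd => (hTsub hd) x hx⟩
  set Pr : ℕ → Prop := fun s =>
    ∃ T : Finset ρ, T.card = s ∧ {n : ℕ | ∀ q ∈ T, c q n = 1}.Infinite with hPr
  have hP0 : Pr 0 := ⟨∅, rfl, by simpa using Set.infinite_univ⟩
  have hPk : ¬ Pr k := by rintro ⟨T, hT, hinf⟩; exact hinf (D1 T hT)
  set s := Nat.findGreatest Pr k with hs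
  have hsspec : Pr s := Nat.findGreatest_spec (Nat.zero_le k) hP0
  have hsle : s ≤ k := Nat.findGreatest_le k
  have hslt : s < k := lt_of_le_of_ne hsle (fun h => hPk (h ▸ hsspec))
  have hmax : ¬ Pr (s + 1) := by
    rcases eq_or_lt_of_le (Nat.succ_le_of_lt hslt) with h | h
    · exact fun hp => hPk (h ▸ hp)
    · exact Nat.findGreatest_is_greatest (Nat.lt_succ_self s) (by omega)
  obtain ⟨T₀, hT₀card, hJinf⟩ := hsspec
  set J : Set ℕ := {n | ∀ q ∈ T₀, c q n = 1} with hJ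
  have C1 : ∀ q, q ∉ (↑T₀ : Set ρ) → (A q ∩ J).Finite := by
    intro q hq
    by_contra hinf
    replace hinf : Set.Infinite _ := hinf
    apply hmax
    refine ⟨insert q T₀, ?_, ?_⟩
    · rw [Finset.card_insert_of_notMem (by simpa using hq), hT₀card]
    · have : {n : ℕ | ∀ p ∈ insert q T₀, c p n = 1} = A q ∩ J := by
        ext n
        simp only [Finset.mem_insert, Set.mem_inter_iff, Set.mem_setOf_eq, hA]
        constructor
        · exact fun h => ⟨h q (Or.inl rfl), fun p hp => h p (Or.inr hp)⟩
        · rintro ⟨h1, h2⟩ p (rfl | hp)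
          · exact h1
          · exact h2 p hp
      rw [this]; exact hinf
  -- greedy thinning
  set R : Finset ℕ → Set ρ := fun E =>
    {q | q ∉ (↑T₀ : Set ρ) ∧ k ≤ (E.filter (fun n => c q n = 1)).card} with hR
  have hRfin : ∀ E : Finset ℕ, (R E).Finite := by
    intro E
    have hsub : R E ⊆ ⋃ S ∈ E.powersetCard k, {q : ρ | ∀ n ∈ S, c q n = 1} := by
      rintro q ⟨hqY, hqcard⟩
      obtain ⟨S, hSsub, hScard⟩ := Finset.exists_subset_card_eq hqcard
      refine Set.mem_iUnion₂.mpr ⟨S, Finset.mem_powersetCard.mpr ⟨hSsub.trans (Finset.filter_subset _ _), hScard⟩, ?_⟩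
      · intro n hn
        exact (Finset.mem_filter.mp (hSsub hn)).2
    refine Set.Finite.subset ?_ hsub
    refine Set.Finite.biUnion (E.powersetCard k).finite_toSet ?_
    intro S hS
    exact D2 S (Finset.mem_powersetCard.mp hS).2
  set Bad : Finset ℕ → Set ℕ := fun E => ⋃ q ∈ R E, (A q ∩ J) with hBad
  have hBadfin : ∀ E : Finset ℕ, (Bad E).Finite := by
    intro E
    exact Set.Finite.biUnion (hRfin E) (fun q hq => C1 q hq.1)
  have step : ∀ E : Finset ℕ, ∃ x, x ∈ J ∧ x ∉ Bad E ∧ ∀ e ∈ E, e < x := by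
    intro E
    have h1 : (J \ (Bad E ∪ Set.Iic (E.sup id))).Infinite :=
      hJinf.diff ((hBadfin E).union (Set.finite_Iic _))
    obtain ⟨x, hx⟩ := h1.nonempty
    refine ⟨x, hx.1, fun h => hx.2 (Or.inl h), fun e he => ?_⟩
    have h2 : ¬ x ≤ E.sup id := fun h => hx.2 (Or.inr h)
    exact lt_of_le_of_lt (Finset.le_sup (f := id) he) (not_le.mp h2)
  choose f hf1 hf2 hf3 using step
  set E : ℕ → Finset ℕ := fun n => Nat.rec ∅ (fun _ Ep => insert (f Ep) Ep) n with hE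
  set d : ℕ → ℕ := fun n => f (E n) with hd
  have hEsucc : ∀ n, E (n + 1) = insert (d n) (E n) := fun n => rfl
  have hmemE : ∀ m n, m < n → d m ∈ E n := by
    intro m n h
    induction n with
    | zero => omega
    | succ n ih =>
      rw [hEsucc]
      rcases Nat.lt_succ_iff_lt_or_eq.mp h with h | h
      · exact Finset.mem_insert_of_mem (ih h)
      · subst h; exact Finset.mem_insert_self _ _
  have hdlt : ∀ m n, m < n → d m < d n := fun m n h => hf3 (E n) (d m) (hmemE m n h)
  have hdinj : Function.Injective d := by
    intro a b hab
    rcases lt_trichotomy a b with h | h | h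
    · exact absurd hab (ne_of_lt (hdlt a b h))
    · exact h
    · exact absurd hab.symm (ne_of_lt (hdlt b a h))
  have hdJ : ∀ n, d n ∈ J := fun n => hf1 (E n)
  have hdBad : ∀ n, d n ∉ Bad (E n) := fun n => hf2 (E n)
  -- the uniform bound
  have hbound : ∀ q, q ∉ (↑T₀ : Set ρ) → ∀ S : Finset ℕ,
      (↑S : Set ℕ) ⊆ A q ∩ Set.range d → S.card ≤ k := by
    intro q hq S hS
    by_contra hcard
    push_neg at hcard
    have hne : S.Nonempty := Finset.card_pos.mp (by omega)
    set sm := S.max' hne with hsm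
    have hsmmem : sm ∈ S := S.max'_mem hne
    have hstage : ∀ x ∈ S, ∃ t, d t = x := fun x hx => (hS hx).2
    choose t ht using hstage
    set tm := t sm hsmmem with htm
    have claim : S.erase sm ⊆ (E tm).filter (fun n => c q n = 1) := by
      intro x hx
      have hxS := Finset.mem_of_mem_erase hx
      have hxlt : x < sm := lt_of_le_of_ne (S.le_max' x hxS) (Finset.ne_of_mem_erase hx)
      have htlt : t x hxS < tm := by
        by_contra hcon
        push_neg at hcon
        rcases eq_or_lt_of_le hcon with h | h
        · rw [← ht sm hsmmem, ← ht x hxS, ← h] at hxlt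
          exact lt_irrefl _ hxlt
        · have := hdlt _ _ h
          rw [ht sm hsmmem, ht x hxS] at this
          omega
      refine Finset.mem_filter.mpr ⟨?_, ?_⟩
      · have := hmemE _ _ htlt
        rwa [ht x hxS] at this
      · exact (hS hxS).1
    have hcard2 : k ≤ ((E tm).filter (fun n => c q n = 1)).card := by
      have := Finset.card_le_card claim
      rw [Finset.card_erase_of_mem hsmmem] at this
      omega
    have hqR : q ∈ R (E tm) := ⟨hq, hcard2⟩
    apply hdBad tm
    have hdtm : d tm = sm := ht sm hsmmem
    refine Set.mem_biUnion hqR ?_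
    rw [hdtm]
    exact ⟨(hS hsmmem).1, hdtm ▸ hdJ tm⟩
  -- pieces
  set P : Fin (k+1) → Set ℕ := fun i => d '' {t | t % (k+1) = i.val} with hP
  refine ⟨↑T₀, T₀.finite_toSet, P, ?_, ?_⟩
  · intro i
    have h1 : Set.range (fun s : ℕ => i.val + s * (k+1)) ⊆ {t | t % (k+1) = i.val} := by
      rintro x ⟨s, rfl⟩
      simp [Nat.add_mul_mod_self_right, Nat.mod_eq_of_lt i.isLt]
    have h2 : ({t | t % (k+1) = i.val} : Set ℕ).Infinite := by
      refine Set.Infinite.mono h1 (Set.infinite_range_of_injective ?_)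
      intro a b hab
      simp only at hab
      have : a * (k+1) = b * (k+1) := by omega
      exact Nat.eq_of_mul_eq_mul_right (Nat.succ_pos k) this
    exact h2.image (Set.injOn_of_injective hdinj)
  · intro q hq
    by_contra hcon
    push_neg at hcon
    have hw : ∀ i : Fin (k+1), ∃ n, n ∈ P i ∧ c q n = 1 := by
      intro i
      obtain ⟨n, hn, hne⟩ := hcon i
      exact ⟨n, hn, fin2_one _ hne⟩
    choose w hw1 hw2 using hw
    have hwt : ∀ i : Fin (k+1), ∃ t, t % (k+1) = i.val ∧ d t = w i := by
      intro i
      obtain ⟨t, ht, hdt⟩ := hw1 i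
      exact ⟨t, ht, hdt⟩
    choose wt hwt1 hwt2 using hwt
    have hwinj : Function.Injective w := by
      intro a b hab
      have : d (wt a) = d (wt b) := by rw [hwt2 a, hwt2 b, hab]
      have hteq := hdinj this
      have : a.val = b.val := by rw [← hwt1 a, ← hwt1 b, hteq]
      exact Fin.ext this
    set W := Finset.image w Finset.univ with hW
    have hWcard : W.card = k + 1 := by
      rw [hW, Finset.card_image_of_injective _ hwinj, Finset.card_univ, Fintype.card_fin]
    have hWsub : (↑W : Set ℕ) ⊆ A q ∩ Set.range d := by
      intro x hx
      simp only [hW, Finset.coe_image, Finset.coe_univ, Set.image_univ, Set.mem_range] at hx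
      obtain ⟨i, rfl⟩ := hx
      exact ⟨hw2 i, ⟨wt i, hwt2 i⟩⟩
    have := hbound q hq W hWsub
    omega

lemma partA (k : ℕ) (hk : 0 < k) (c : ℚ → ℕ → Fin 2)
    (H : ¬ ∃ (C : Set ℚ) (D : Set ℕ), C.ncard = k ∧ D.ncard = k ∧
      ∀ x ∈ C, ∀ d ∈ D, c x d = 1) :
    ∃ (C : Set ℚ) (D : Set ℕ), Nonempty (ℚ ↪o ↥C) ∧ D.Infinite ∧
      ∀ x ∈ C, ∀ d ∈ D, c x d = 0 := by
  classical
  obtain ⟨Y, hYfin, P, hPinf, hcov⟩ := core_lemma k hk c H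
  haveI := hYfin.to_subtype
  set C' : Fin (k+1) → Set ℚ := fun i => {q | q ∉ Y ∧ ∀ n ∈ P i, c q n = 0} with hC'
  set f : (Fin (k+1)) ⊕ ↥Y → Set ℝ := fun j =>
    Sum.rec (fun i => closure ((fun q : ℚ => (q : ℝ)) '' C' i)) (fun y => {((y : ℚ) : ℝ)}) j with hf
  have hclosed : ∀ j, IsClosed (f j) := by
    rintro (i | y)
    · exact isClosed_closure
    · exact isClosed_singleton
  have hrange : Set.range (fun q : ℚ => (q : ℝ)) ⊆ ⋃ j, f j := by
    rintro _ ⟨q, rfl⟩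
    by_cases hq : q ∈ Y
    · exact Set.mem_iUnion.mpr ⟨Sum.inr ⟨q, hq⟩, rfl⟩
    · obtain ⟨i, hi⟩ := hcov q hq
      exact Set.mem_iUnion.mpr ⟨Sum.inl i, subset_closure ⟨q, ⟨hq, hi⟩, rfl⟩⟩
  have hcover : ⋃ j, f j = Set.univ := by
    have hd : Dense (Set.range (fun q : ℚ => (q : ℝ))) := Rat.denseRange_cast
    apply Set.eq_univ_of_univ_subset
    calc (Set.univ : Set ℝ) = closure (Set.range (fun q : ℚ => (q : ℝ))) := hd.closure_eq.symm
    _ ⊆ closure (⋃ j, f j) := closure_mono hrange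
    _ = ⋃ j, f j := (isClosed_iUnion_of_finite hclosed).closure_eq
  obtain ⟨j, x, hx⟩ := nonempty_interior_of_iUnion_of_closed hclosed hcover
  obtain ⟨ε, hε, hball⟩ := Metric.isOpen_iff.mp isOpen_interior x hx
  have hball2 : Set.Ioo (x - ε) (x + ε) ⊆ f j := by
    rw [← Real.ball_eq_Ioo]
    exact hball.trans interior_subset
  rcases j with i | y
  · -- the good case
    set a := x - ε with ha
    set b := x + ε with hb
    have hab : a < b := by simp [ha, hb]; linarith
    have key : ∀ u v : ℝ, a ≤ u → v ≤ b → u < v →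
        ∃ q : ℚ, q ∈ C' i ∧ u < (q : ℝ) ∧ (q : ℝ) < v := by
      intro u v hu hv huv
      have hmid : (u + v) / 2 ∈ Set.Ioo u v := ⟨by linarith, by linarith⟩
      have hmem : (u + v) / 2 ∈ closure ((fun q : ℚ => (q : ℝ)) '' C' i) := by
        apply hball2
        exact ⟨lt_of_le_of_lt hu hmid.1, lt_of_lt_of_le hmid.2 hv⟩
      obtain ⟨z, hz1, hz2⟩ := mem_closure_iff.mp hmem (Set.Ioo u v) isOpen_Ioo hmid
      obtain ⟨q, hq, rfl⟩ := hz2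
      exact ⟨q, hq, hz1.1, hz1.2⟩
    set S : Set ℚ := {q | q ∈ C' i ∧ a < (q : ℝ) ∧ (q : ℝ) < b} with hS
    obtain ⟨q0, hq0, hq0a, hq0b⟩ := key a b le_rfl le_rfl hab
    obtain ⟨q1, hq1, hq1a, hq1b⟩ := key (q0 : ℝ) b (le_of_lt hq0a) le_rfl hq0b
    haveI : Nontrivial ↥S := by
      refine ⟨⟨⟨q0, hq0, hq0a, hq0b⟩, ⟨q1, hq1, lt_trans hq0a hq1a, hq1b⟩, ?_⟩⟩
      intro hcon
      have : q0 = q1 := congrArg Subtype.val hcon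
      subst this
      exact lt_irrefl _ hq1a
    haveI : DenselyOrdered ↥S := by
      constructor
      rintro ⟨p, hpC, hpa, hpb⟩ ⟨r, hrC, hra, hrb⟩ hpr
      have hpr' : (p : ℝ) < (r : ℝ) := by
        rw [Subtype.mk_lt_mk] at hpr
        exact_mod_cast hpr
      obtain ⟨q, hqC, hq1', hq2'⟩ := key (p : ℝ) (r : ℝ) (le_of_lt hpa) (le_of_lt hrb) hpr'
      refine ⟨⟨q, hqC, lt_trans hpa hq1', lt_trans hq2' hrb⟩, ?_, ?_⟩
      · rw [Subtype.mk_lt_mk]; exact_mod_cast hq1'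
      · rw [Subtype.mk_lt_mk]; exact_mod_cast hq2'
    obtain ⟨emb⟩ := Order.embedding_from_countable_to_dense ℚ ↥S
    refine ⟨S, P i, ⟨emb⟩, hPinf i, ?_⟩
    intro q hq d hd
    exact hq.1.2 d hd
  · -- singleton has no interior : contradiction
    exfalso
    have h1 : x - ε / 2 ∈ Set.Ioo (x - ε) (x + ε) := by constructor <;> linarith
    have h2 : x + ε / 2 ∈ Set.Ioo (x - ε) (x + ε) := by constructor <;> linarith
    have e1 := hball2 h1
    have e2 := hball2 h2
    simp only [hf, Set.mem_singleton_iff] at e1 e2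
    have : x - ε / 2 = x + ε / 2 := by rw [e1, e2]
    linarith

universe u

lemma ordLemma (m : ℕ) (F : Fin m → Set Ordinal.{u}) :
    ∀ (n : ℕ) (b : Ordinal.{u}),
      (∀ x : Ordinal.{u}, b ≤ x → x < b + omega0 ^ (n : Ordinal) → ∃ i, x ∈ F i) →
      ∃ (i : Fin m) (g : Ordinal.{u} → Ordinal.{u}),
        (∀ x y, x < y → y < omega0 ^ (n : Ordinal) → g x < g y) ∧
        (∀ x, x < omega0 ^ (n : Ordinal) →
          g x ∈ F i ∧ b ≤ g x ∧ g x < b + omega0 ^ (n : Ordinal)) := by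
  intro n
  induction n with
  | zero =>
    intro b hcov
    have h1 : (omega0 : Ordinal) ^ ((0 : ℕ) : Ordinal) = 1 := by simp
    have hb1 : b < b + 1 := lt_add_of_pos_right b zero_lt_one
    obtain ⟨i, hi⟩ := hcov b le_rfl (by rw [h1]; exact hb1)
    refine ⟨i, fun _ => b, ?_, ?_⟩
    · intro x y hxy hy
      rw [h1] at hy
      exact absurd hxy (by simp [Ordinal.lt_one_iff_zero.mp hy, not_lt_zero])
    · intro x hx
      exact ⟨hi, le_rfl, by rw [h1]; exact hb1⟩
  | succ n ih =>
    intro b hcov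
    set w : Ordinal := omega0 ^ (n : Ordinal) with hw
    have hw0 : w ≠ 0 := opow_ne_zero _ omega0_ne_zero
    have hW : omega0 ^ ((n + 1 : ℕ) : Ordinal) = w * omega0 := by
      push_cast
      rw [opow_add, opow_one]
    -- blocks
    have hblockcov : ∀ t : ℕ, ∀ x : Ordinal, b + w * t ≤ x → x < (b + w * t) + w → ∃ i, x ∈ F i := by
      intro t x hx1 hx2
      refine hcov x (le_trans (le_self_add (a := b)) hx1) ?_
      rw [hW]
      calc x < (b + w * t) + w := hx2
      _ = b + (w * t + w) := by rw [add_assoc]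
      _ = b + w * ((t : Ordinal) + 1) := by rw [mul_add, mul_one]
      _ ≤ b + w * omega0 := by
          refine add_le_add_right (mul_le_mul_right ?_ w) b
          have : ((t : Ordinal) + 1) = ((t + 1 : ℕ) : Ordinal) := by push_cast; ring_nf
          rw [this]
          exact (nat_lt_omega0 (t + 1)).le
    have hord := fun t : ℕ => ih (b + w * t) (hblockcov t)
    choose I g hg1 hg2 using hord
    obtain ⟨i, hfib⟩ := Finite.exists_infinite_fiber I
    have hinf : {t : ℕ | I t = i}.Infinite := Set.infinite_coe_iff.mp hfib
    set N := Nat.nth (fun t => I t = i) with hN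
    have hNlt : ∀ {a b : ℕ}, a < b → N a < N b := fun h => (Nat.nth_lt_nth hinf).mpr h
    have hNp : ∀ t, I (N t) = i := fun t => Nat.nth_mem_of_infinite hinf t
    refine ⟨i, fun x => if h : x / w < omega0 then
        g (N (Classical.choose (lt_omega0.mp h))) (x % w) else 0, ?_, ?_⟩
    · intro x y hxy hyW
      have hyW' : y < w * omega0 := by rw [← hW]; exact hyW
      have hyw : y / w < omega0 := (div_lt hw0).mpr hyW'
      have hxw : x / w < omega0 := (div_lt hw0).mpr (lt_trans hxy hyW')
      beta_reduce
      rw [dif_pos hxw, dif_pos hyw]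
      set tx := Classical.choose (lt_omega0.mp hxw) with htxd
      set ty := Classical.choose (lt_omega0.mp hyw) with htyd
      have htx : x / w = (tx : Ordinal) := Classical.choose_spec (lt_omega0.mp hxw)
      have hty : y / w = (ty : Ordinal) := Classical.choose_spec (lt_omega0.mp hyw)
      have hdivle : x / w ≤ y / w := div_le_left (le_of_lt hxy) w
      rcases eq_or_lt_of_le hdivle with heq | hlt
      · -- same block
        have htxy : tx = ty := by
          have h2 : (tx : Ordinal) = (ty : Ordinal) := by rw [← htx, ← hty, heq]
          exact_mod_cast h2
        rw [htxy]
        refine hg1 (N ty) (x % w) (y % w) ?_ (mod_lt y hw0)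
        have hx' := div_add_mod x w
        have hy' := div_add_mod y w
        rw [heq, hty] at hx'
        rw [hty] at hy'
        have h3 : w * (ty : Ordinal) + x % w < w * (ty : Ordinal) + y % w := by
          rw [hx', hy']; exact hxy
        exact (add_lt_add_iff_left _).mp h3
      · -- different blocks
        have htxty : tx < ty := by
          have : (tx : Ordinal) < (ty : Ordinal) := by rw [← htx, ← hty]; exact hlt
          exact_mod_cast this
        have hNlt' : N tx < N ty := hNlt htxty
        have h1 : g (N tx) (x % w) < (b + w * (N tx)) + w := (hg2 (N tx) (x % w) (mod_lt x hw0)).2.2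
        have h2 : b + w * (N ty) ≤ g (N ty) (y % w) := (hg2 (N ty) (y % w) (mod_lt y hw0)).2.1
        refine lt_of_lt_of_le h1 (le_trans ?_ h2)
        calc (b + w * (N tx)) + w = b + w * ((N tx : Ordinal) + 1) := by
              rw [add_assoc, mul_add, mul_one]
        _ ≤ b + w * (N ty) := by
              refine add_le_add_right (mul_le_mul_right ?_ w) b
              have : ((N tx : Ordinal) + 1) = ((N tx + 1 : ℕ) : Ordinal) := by push_cast; ring_nf
              rw [this]
              exact_mod_cast hNlt'
    · intro x hxW
      have hxw : x / w < omega0 := (div_lt hw0).mpr (by rw [← hW]; exact hxW)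
      beta_reduce
      rw [dif_pos hxw]
      set tx := Classical.choose (lt_omega0.mp hxw) with htxd
      obtain ⟨hF, hlo, hhi⟩ := hg2 (N tx) (x % w) (mod_lt x hw0)
      rw [hNp tx] at hF
      refine ⟨hF, le_trans (le_self_add (a := b)) hlo, ?_⟩
      refine lt_of_lt_of_le hhi ?_
      rw [hW]
      calc (b + w * (N tx)) + w = b + w * ((N tx : Ordinal) + 1) := by
            rw [add_assoc, mul_add, mul_one]
      _ ≤ b + w * omega0 := by
            refine add_le_add_right (mul_le_mul_right ?_ w) b
            have : ((N tx : Ordinal) + 1) = ((N tx + 1 : ℕ) : Ordinal) := by push_cast; ring_nf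
            rw [this]
            exact (nat_lt_omega0 _).le

lemma lift_opow_nat.{u1, v1} (n : ℕ) :
    Ordinal.lift.{v1, u1} (omega0 ^ (n : Ordinal)) = omega0 ^ (n : Ordinal) := by
  induction n with
  | zero => simp
  | succ n ih =>
    have h1 : ((n + 1 : ℕ) : Ordinal.{u1}) = (n : Ordinal) + 1 := Nat.cast_add_one n
    have h2 : ((n + 1 : ℕ) : Ordinal.{max u1 v1}) = (n : Ordinal) + 1 := Nat.cast_add_one n
    rw [h1, h2, opow_add, opow_add, opow_one, opow_one, lift_mul, ih, lift_omega0]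

lemma lift_opow_omega0.{u1, v1} :
    Ordinal.lift.{v1, u1} (omega0 ^ omega0) = omega0 ^ omega0 := by
  apply le_antisymm
  · apply le_of_forall_lt
    intro x hx
    obtain ⟨y, rfl⟩ := mem_range_lift_of_le (le_of_lt hx)
    rw [lift_lt] at hx
    rw [lt_opow_of_isSuccLimit omega0_ne_zero isSuccLimit_omega0] at hx ⊢
    obtain ⟨c', hc', hlt⟩ := hx
    obtain ⟨n, rfl⟩ := lt_omega0.mp hc'
    refine ⟨n, nat_lt_omega0 n, ?_⟩
    rw [← lift_opow_nat.{u1, v1} n, lift_lt]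
    exact hlt
  · apply le_of_forall_lt
    intro x hx
    rw [lt_opow_of_isSuccLimit omega0_ne_zero isSuccLimit_omega0] at hx
    obtain ⟨c', hc', hlt⟩ := hx
    obtain ⟨n, rfl⟩ := lt_omega0.mp hc'
    refine lt_of_lt_of_le hlt ?_
    rw [← lift_opow_nat.{u1, v1} n]
    exact lift_le.mpr (opow_le_opow_right omega0_pos (nat_lt_omega0 n).le)

noncomputable def liftIioIso.{u1, v1} (a : Ordinal.{u1}) :
    ↥(Set.Iio a) ≃o ↥(Set.Iio (Ordinal.lift.{v1, u1} a)) where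
  toFun x := ⟨Ordinal.lift.{v1, u1} x.1, lift_lt.mpr x.2⟩
  invFun y := ⟨Classical.choose (mem_range_lift_of_le (le_of_lt y.2)), by
    have hsp := Classical.choose_spec (mem_range_lift_of_le (le_of_lt y.2))
    have h2 := y.2
    rw [Set.mem_Iio, ← hsp, lift_lt] at h2
    exact h2⟩
  left_inv x := by
    apply Subtype.ext
    exact lift_inj.mp (Classical.choose_spec (mem_range_lift_of_le
      (le_of_lt (show Ordinal.lift.{v1, u1} x.1 < Ordinal.lift.{v1, u1} a from lift_lt.mpr x.2))))
  right_inv y := by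
    apply Subtype.ext
    exact Classical.choose_spec (mem_range_lift_of_le (le_of_lt y.2))
  map_rel_iff' {x y} := by
    simp only [Equiv.coe_fn_mk, Subtype.mk_le_mk]
    exact lift_le

noncomputable def crossIso.{u1, v1} :
    ↥(Set.Iio (omega0.{u1} ^ omega0.{u1})) ≃o ↥(Set.Iio (omega0.{v1} ^ omega0.{v1})) :=
  ((liftIioIso.{u1, v1} (omega0 ^ omega0)).trans
    (OrderIso.setCongr _ _ (by rw [lift_opow_omega0.{u1, v1}]))).trans
    ((liftIioIso.{v1, u1} (omega0 ^ omega0)).trans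
      (OrderIso.setCongr _ _ (by rw [lift_opow_omega0.{v1, u1}]))).symm

lemma partB (k : ℕ) (hk : 0 < k) (c : ↥(Set.Iio (omega0.{u} ^ omega0.{u})) → ℕ → Fin 2)
    (H : ¬ ∃ (C : Set ↥(Set.Iio (omega0.{u} ^ omega0.{u}))) (D : Set ℕ),
      C.ncard = k ∧ D.ncard = k ∧ ∀ x ∈ C, ∀ d ∈ D, c x d = 1) :
    ∃ (C : Set ↥(Set.Iio (omega0.{u} ^ omega0.{u}))) (D : Set ℕ),
      Nonempty (↥C ≃o ↥(Set.Iio (omega0.{u} ^ omega0.{u}))) ∧ D.Infinite ∧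
      ∀ x ∈ C, ∀ d ∈ D, c x d = 0 := by
  classical
  obtain ⟨Y, hYfin, P, hPinf, hcov⟩ := core_lemma k hk c H
  -- bound the finite exceptional set Y below ω^n₀
  have hy : ∀ y : ↥(Set.Iio (omega0.{u} ^ omega0.{u})),
      ∃ n : ℕ, (y : Ordinal) < omega0 ^ (n : Ordinal) := by
    intro y
    have h2 := y.2
    rw [Set.mem_Iio, lt_opow_of_isSuccLimit omega0_ne_zero isSuccLimit_omega0] at h2
    obtain ⟨c', hc', hlt⟩ := h2
    obtain ⟨n, rfl⟩ := lt_omega0.mp hc'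
    exact ⟨n, hlt⟩
  choose φ hφ using hy
  set Fs := hYfin.toFinset with hFs
  set n₀ : ℕ := Fs.sup φ + 1 with hn₀d
  have hn₀ : ∀ y ∈ Y, (y : Ordinal) < omega0 ^ (n₀ : Ordinal) := by
    intro y hyY
    have h1 : φ y ≤ Fs.sup φ := Finset.le_sup (hYfin.mem_toFinset.mpr hyY)
    refine lt_of_lt_of_le (hφ y) (opow_le_opow_right omega0_pos ?_)
    exact_mod_cast Nat.le_succ_of_le h1
  set F : Fin (k+1) → Set Ordinal.{u} := fun i =>
    {o | ∃ h : o ∈ Set.Iio (omega0.{u} ^ omega0.{u}), ∀ n ∈ P i, c ⟨o, h⟩ n = 0} with hF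
  -- facts about block bounds
  have hup : ∀ (a : ℕ) (x : Ordinal.{u}),
      x < omega0 ^ ((n₀ + a : ℕ) : Ordinal) + omega0 ^ (a : Ordinal) →
      x < omega0 ^ (((n₀ + a + 1 : ℕ)) : Ordinal) := by
    intro a x hx
    refine lt_of_lt_of_le hx ?_
    have h1 : omega0 ^ ((a : ℕ) : Ordinal) ≤ omega0 ^ ((n₀ + a : ℕ) : Ordinal) :=
      opow_le_opow_right omega0_pos (by exact_mod_cast Nat.le_add_left a n₀)
    calc omega0 ^ ((n₀ + a : ℕ) : Ordinal) + omega0 ^ ((a : ℕ) : Ordinal)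
        ≤ omega0 ^ ((n₀ + a : ℕ) : Ordinal) + omega0 ^ ((n₀ + a : ℕ) : Ordinal) :=
          add_le_add_right h1 _
    _ = omega0 ^ ((n₀ + a : ℕ) : Ordinal) * 2 := by
          have h2 : (2 : Ordinal) = 1 + 1 := by norm_num
          rw [h2, mul_add, mul_one]
    _ ≤ omega0 ^ ((n₀ + a : ℕ) : Ordinal) * omega0 := by
          refine mul_le_mul_right ?_ _
          exact_mod_cast (nat_lt_omega0 2).le
    _ = omega0 ^ (((n₀ + a + 1 : ℕ)) : Ordinal) := by
          have hc : (((n₀ + a + 1 : ℕ)) : Ordinal) = ((n₀ + a : ℕ) : Ordinal) + 1 :=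
            Nat.cast_add_one (n₀ + a)
          rw [hc, opow_add, opow_one]
  have homega : ∀ a : ℕ, omega0.{u} ^ ((a : ℕ) : Ordinal) ≤ omega0 ^ omega0 :=
    fun a => opow_le_opow_right omega0_pos (nat_lt_omega0 a).le
  have homega' : ∀ (a : ℕ) (x : Ordinal.{u}),
      x < omega0 ^ ((n₀ + a : ℕ) : Ordinal) + omega0 ^ (a : Ordinal) →
      x < omega0 ^ omega0 := by
    intro a x hx
    exact lt_of_lt_of_le (hup a x hx) (homega _)
  -- cover hypothesis for each block
  have hblk : ∀ a : ℕ, ∀ x : Ordinal.{u}, omega0 ^ ((n₀ + a : ℕ) : Ordinal) ≤ x →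
      x < omega0 ^ ((n₀ + a : ℕ) : Ordinal) + omega0 ^ (a : Ordinal) → ∃ i, x ∈ F i := by
    intro a x hx1 hx2
    have hxω : x < omega0 ^ omega0 := homega' a x hx2
    have hxY : (⟨x, hxω⟩ : ↥(Set.Iio (omega0.{u} ^ omega0.{u}))) ∉ Y := by
      intro hmem
      have h1 := hn₀ _ hmem
      have h2 : omega0.{u} ^ ((n₀ : ℕ) : Ordinal) ≤ omega0 ^ ((n₀ + a : ℕ) : Ordinal) :=
        opow_le_opow_right omega0_pos (by exact_mod_cast Nat.le_add_right n₀ a)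
      exact absurd (lt_of_lt_of_le h1 (h2.trans hx1)) (lt_irrefl x)
    obtain ⟨i, hi⟩ := hcov _ hxY
    exact ⟨i, hxω, hi⟩
  have hord := fun a : ℕ =>
    ordLemma (k+1) F a (omega0 ^ ((n₀ + a : ℕ) : Ordinal)) (hblk a)
  choose I g hg1 hg2 using hord
  obtain ⟨i, hfib⟩ := Finite.exists_infinite_fiber I
  have hinf : {t : ℕ | I t = i}.Infinite := Set.infinite_coe_iff.mp hfib
  set N := Nat.nth (fun t => I t = i) with hN
  have hNlt : ∀ {a b : ℕ}, a < b → N a < N b := fun h => (Nat.nth_lt_nth hinf).mpr h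
  have hNmono : StrictMono N := fun a b h => hNlt h
  have hNp : ∀ t, I (N t) = i := fun t => Nat.nth_mem_of_infinite hinf t
  -- existence of a block index for each point
  have hex : ∀ x : ↥(Set.Iio (omega0.{u} ^ omega0.{u})),
      ∃ j : ℕ, (x : Ordinal) < omega0 ^ ((N j : ℕ) : Ordinal) := by
    intro x
    refine ⟨φ x, lt_of_lt_of_le (hφ x) (opow_le_opow_right omega0_pos ?_)⟩
    exact_mod_cast hNmono.le_apply
  -- the glued map
  have hgbound : ∀ (x : ↥(Set.Iio (omega0.{u} ^ omega0.{u}))),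
      g (N (Nat.find (hex x))) (x : Ordinal) < omega0 ^ omega0 := by
    intro x
    have hsp := Nat.find_spec (hex x)
    have h3 := (hg2 (N (Nat.find (hex x))) (x : Ordinal) hsp).2.2
    exact homega' _ _ h3
  set h : ↥(Set.Iio (omega0.{u} ^ omega0.{u})) → ↥(Set.Iio (omega0.{u} ^ omega0.{u})) :=
    fun x => ⟨g (N (Nat.find (hex x))) (x : Ordinal), hgbound x⟩ with hh
  have hmono : StrictMono h := by
    intro x y hxy
    have hxy' : (x : Ordinal) < (y : Ordinal) := hxy
    set jx := Nat.find (hex x) with hjx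
    set jy := Nat.find (hex y) with hjy
    have hjle : jx ≤ jy := Nat.find_mono (fun n hn => lt_trans hxy' hn)
    have hspy : (y : Ordinal) < omega0 ^ ((N jy : ℕ) : Ordinal) := Nat.find_spec (hex y)
    have hspx : (x : Ordinal) < omega0 ^ ((N jx : ℕ) : Ordinal) := Nat.find_spec (hex x)
    simp only [hh, Subtype.mk_lt_mk]
    show g (N (Nat.find (hex x))) (x : Ordinal) < g (N (Nat.find (hex y))) (y : Ordinal)
    rcases eq_or_lt_of_le hjle with heq | hlt
    · rw [← hjx, ← hjy, heq]
      exact hg1 (N jy) _ _ hxy' hspy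
    · rw [← hjx, ← hjy]
      have hNj : N jx < N jy := hNlt hlt
      have h1 : g (N jx) (x : Ordinal) <
          omega0 ^ ((n₀ + N jx : ℕ) : Ordinal) + omega0 ^ ((N jx : ℕ) : Ordinal) :=
        (hg2 (N jx) _ hspx).2.2
      have h2 : omega0 ^ ((n₀ + N jy : ℕ) : Ordinal) ≤ g (N jy) (y : Ordinal) :=
        (hg2 (N jy) _ hspy).2.1
      refine lt_of_lt_of_le (hup _ _ h1) (le_trans ?_ h2)
      refine opow_le_opow_right omega0_pos ?_
      exact_mod_cast (by omega : n₀ + N jx + 1 ≤ n₀ + N jy)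
  refine ⟨Set.range h, P i, ⟨(StrictMono.orderIso h hmono).symm⟩, hPinf i, ?_⟩
  intro x hx d hd
  obtain ⟨x', rfl⟩ := hx
  have hmem := (hg2 (N (Nat.find (hex x'))) (x' : Ordinal) (Nat.find_spec (hex x'))).1
  rw [hNp] at hmem
  obtain ⟨hb, hzero⟩ := hmem
  have hrw : h x' = ⟨g (N (Nat.find (hex x'))) (x' : Ordinal), hb⟩ := Subtype.ext rfl
  rw [hrw]
  exact hzero d hd


/-- The polarised partition relations `(η; ω) → (η k; ω k)` and
`(ω^ω; ω) → (ω^ω k; ω k)` for every natural number `k`. -/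
theorem stmt_6 (k : ℕ) :
    (∀ c : ℚ → ℕ → Fin 2,
      (∃ (C : Set ℚ) (D : Set ℕ), Nonempty (ℚ ↪o ↥C) ∧ D.Infinite ∧
        ∀ x ∈ C, ∀ d ∈ D, c x d = 0) ∨
      (∃ (C : Set ℚ) (D : Set ℕ), C.ncard = k ∧ D.ncard = k ∧
        ∀ x ∈ C, ∀ d ∈ D, c x d = 1)) ∧
    (∀ c : ↥(Set.Iio (omega0 ^ omega0)) → ℕ → Fin 2,
      (∃ (C : Set ↥(Set.Iio (omega0 ^ omega0))) (D : Set ℕ),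
        Nonempty (↥C ≃o ↥(Set.Iio (omega0 ^ omega0))) ∧ D.Infinite ∧
        ∀ x ∈ C, ∀ d ∈ D, c x d = 0) ∨
      (∃ (C : Set ↥(Set.Iio (omega0 ^ omega0))) (D : Set ℕ),
        C.ncard = k ∧ D.ncard = k ∧ ∀ x ∈ C, ∀ d ∈ D, c x d = 1)) := by
  rcases Nat.eq_zero_or_pos k with hk | hk
  · subst hk
    constructor
    · intro c
      exact Or.inr ⟨∅, ∅, by simp, by simp, by simp⟩
    · intro c
      exact Or.inr ⟨∅, ∅, by simp, by simp, by simp⟩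
  · constructor
    · intro c
      by_cases H : ∃ (C : Set ℚ) (D : Set ℕ), C.ncard = k ∧ D.ncard = k ∧
        ∀ x ∈ C, ∀ d ∈ D, c x d = 1
      · exact Or.inr H
      · exact Or.inl (partA k hk c H)
    · intro c
      by_cases H : ∃ (C : Set ↥(Set.Iio (omega0 ^ omega0))) (D : Set ℕ),
        C.ncard = k ∧ D.ncard = k ∧ ∀ x ∈ C, ∀ d ∈ D, c x d = 1
      · exact Or.inr H
      · obtain ⟨C, D, ⟨iso⟩, hD, hz⟩ := partB k hk c H
        exact Or.inl ⟨C, D, ⟨iso.trans crossIso⟩, hD, hz⟩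
end

section
/- Let k and m be natural numbers, let F and P be linear orders, and let S₀, …, S_{k-1} and T₀, …, T_{m-1} be linear orders. Suppose that for all i < k and j < m the following holds: for every E ⊆ Sᵢ × Tⱼ, either there exist C ⊆ Sᵢ order-isomorphic to Sᵢ and D ⊆ Tⱼ order-isomorphic to Tⱼ with C × D ⊆ (Sᵢ × Tⱼ) \ E, or there exist C ⊆ Sᵢ admitting an order embedding of F and D ⊆ Tⱼ admitting an order embedding of P with C × D ⊆ E. Let S be the lexicographic sum S₀ + ⋯ + S_{k-1} and T the lexicographic sum T₀ + ⋯ + T_{m-1}. Then for every E ⊆ S × T, either there exist C ⊆ S order-isomorphic to S and D ⊆ T order-isomorphic to T with C × D ⊆ (S × T) \ E, or there exist C ⊆ S admitting an order embedding of F and D ⊆ T admitting an order embedding of P with C × D ⊆ E. -/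
section Helpers

lemma lexmk_le {ι : Type*} [Preorder ι] {A : ι → Type*} [∀ i, Preorder (A i)]
    {i j : ι} {a : A i} {b : A j} :
    toLex (⟨i, a⟩ : Σ i, A i) ≤ toLex (⟨j, b⟩ : Σ i, A i) ↔ i < j ∨ ∃ h : i = j, h ▸ a ≤ b :=
  Sigma.Lex.le_def

/-- Image of a set under an order embedding, as an order iso. -/
noncomputable def OrderEmbedding.imageIso {α β : Type*} [Preorder α] [Preorder β]
    (g : α ↪o β) (s : Set α) : ↥s ≃o ↥(⇑g '' s) where
  toEquiv := Equiv.Set.image g s g.injective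
  map_rel_iff' := by
    intro a b
    simp only [Equiv.Set.image_apply, Subtype.mk_le_mk, ← Subtype.coe_le_coe]
    exact g.le_iff_le

/-- Congruence of lex sigma under componentwise order isos. -/
def sigmaLexCongr {ι : Type*} [Preorder ι] {A B : ι → Type*} [∀ i, Preorder (A i)]
    [∀ i, Preorder (B i)] (e : ∀ i, A i ≃o B i) : (Σₗ i, A i) ≃o (Σₗ i, B i) where
  toFun p := toLex ⟨(ofLex p).1, e (ofLex p).1 (ofLex p).2⟩
  invFun q := toLex ⟨(ofLex q).1, (e (ofLex q).1).symm (ofLex q).2⟩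
  left_inv p := by
    rcases p with ⟨i, a⟩
    show toLex (⟨i, (e i).symm (e i a)⟩ : Σ i, A i) = toLex ⟨i, a⟩; simp
  right_inv q := by
    rcases q with ⟨i, a⟩
    show toLex (⟨i, e i ((e i).symm a)⟩ : Σ i, B i) = toLex ⟨i, a⟩; simp
  map_rel_iff' := by
    rintro ⟨i, a⟩ ⟨j, b⟩
    show toLex (⟨i, e i a⟩ : Σ i, B i) ≤ toLex (⟨j, e j b⟩ : Σ i, B i) ↔
      toLex (⟨i, a⟩ : Σ i, A i) ≤ toLex (⟨j, b⟩ : Σ i, A i)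
    rw [lexmk_le, lexmk_le]
    constructor
    · rintro (h | ⟨rfl, h⟩)
      · exact Or.inl h
      · exact Or.inr ⟨rfl, by simpa using h⟩
    · rintro (h | ⟨rfl, h⟩)
      · exact Or.inl h
      · exact Or.inr ⟨rfl, by simpa using h⟩

/-- Packing a lex sigma of subtypes into a subset of the lex sigma. -/
def sigmaLexSubtypeIso {ι : Type*} [Preorder ι] {A : ι → Type*} [∀ i, Preorder (A i)]
    (C : ∀ i, Set (A i)) :
    (Σₗ i, ↥(C i)) ≃o ↥{p : Σₗ i, A i | (ofLex p).2 ∈ C (ofLex p).1} where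
  toFun p := ⟨toLex ⟨(ofLex p).1, ((ofLex p).2 : A (ofLex p).1)⟩, (ofLex p).2.2⟩
  invFun q := toLex ⟨(ofLex q.1).1, ⟨(ofLex q.1).2, q.2⟩⟩
  left_inv p := by rcases p with ⟨i, a⟩; rfl
  right_inv q := by rcases q with ⟨⟨i, a⟩, hq⟩; rfl
  map_rel_iff' := by
    rintro ⟨i, a⟩ ⟨j, b⟩
    show (⟨toLex ⟨i, (a : A i)⟩, _⟩ : ↥{p : Σₗ i, A i | (ofLex p).2 ∈ C (ofLex p).1}) ≤
        ⟨toLex ⟨j, (b : A j)⟩, _⟩ ↔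
      toLex (⟨i, a⟩ : Σ i, ↥(C i)) ≤ toLex (⟨j, b⟩ : Σ i, ↥(C i))
    change toLex (⟨i, (a : A i)⟩ : Σ i, A i) ≤ toLex (⟨j, (b : A j)⟩ : Σ i, A i) ↔ _
    rw [lexmk_le, lexmk_le]
    constructor
    · rintro (h | ⟨rfl, h⟩)
      · exact Or.inl h
      · exact Or.inr ⟨rfl, by simpa [← Subtype.coe_le_coe] using h⟩
    · rintro (h | ⟨rfl, h⟩)
      · exact Or.inl h
      · exact Or.inr ⟨rfl, by simpa [← Subtype.coe_le_coe] using h⟩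

/-- The inclusion of a summand into the lex sigma. -/
def sigmaLexMk {ι : Type*} [Preorder ι] {A : ι → Type*} [∀ i, Preorder (A i)] (i : ι) :
    A i ↪o (Σₗ i', A i') where
  toFun x := toLex ⟨i, x⟩
  inj' := by intro a b hab; simpa using toLex.injective hab
  map_rel_iff' := by
    intro a b
    show toLex (⟨i, a⟩ : Σ i', A i') ≤ toLex (⟨i, b⟩ : Σ i', A i') ↔ a ≤ b
    rw [lexmk_le]
    constructor
    · rintro (h | ⟨h, hab⟩)
      · exact absurd h (lt_irrefl i)
      · rw [Subsingleton.elim h rfl] at hab; exact hab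
    · intro hab; exact Or.inr ⟨rfl, hab⟩

/-- One refinement step: transfer the partition hypothesis along order isos onto subsets. -/
lemma refine_step {α β F P : Type*} [LinearOrder α] [LinearOrder β] [LinearOrder F]
    [LinearOrder P]
    (h : ∀ E : Set (α × β),
      (∃ (C : Set α) (D : Set β), Nonempty (α ≃o ↥C) ∧ Nonempty (β ≃o ↥D) ∧
        ∀ x ∈ C, ∀ y ∈ D, (x, y) ∉ E) ∨
      (∃ (C : Set α) (D : Set β), Nonempty (F ↪o ↥C) ∧ Nonempty (P ↪o ↥D) ∧
        ∀ x ∈ C, ∀ y ∈ D, (x, y) ∈ E))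
    (Ci : Set α) (Dj : Set β) (e : α ≃o ↥Ci) (f : β ≃o ↥Dj) (E : Set (α × β)) :
    (∃ C ⊆ Ci, ∃ D ⊆ Dj, Nonempty (α ≃o ↥C) ∧ Nonempty (β ≃o ↥D) ∧
        ∀ x ∈ C, ∀ y ∈ D, (x, y) ∉ E) ∨
    (∃ (C : Set α) (D : Set β), Nonempty (F ↪o ↥C) ∧ Nonempty (P ↪o ↥D) ∧
        ∀ x ∈ C, ∀ y ∈ D, (x, y) ∈ E) := by
  let g : α ↪o α := e.toOrderEmbedding.trans (OrderEmbedding.subtype _)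
  let g' : β ↪o β := f.toOrderEmbedding.trans (OrderEmbedding.subtype _)
  have hg : ∀ x, g x ∈ Ci := fun x => (e x).2
  have hg' : ∀ y, g' y ∈ Dj := fun y => (f y).2
  rcases h {q | (g q.1, g' q.2) ∈ E} with
    ⟨C, D, ⟨eC⟩, ⟨eD⟩, hneg⟩ | ⟨C, D, ⟨eC⟩, ⟨eD⟩, hpos⟩
  · refine Or.inl ⟨⇑g '' C, ?_, ⇑g' '' D, ?_, ⟨eC.trans (g.imageIso C)⟩,
      ⟨eD.trans (g'.imageIso D)⟩, ?_⟩
    · rintro x ⟨a, _, rfl⟩; exact hg a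
    · rintro y ⟨b, _, rfl⟩; exact hg' b
    · rintro x ⟨a, ha, rfl⟩ y ⟨b, hb, rfl⟩
      exact hneg a ha b hb
  · refine Or.inr ⟨⇑g '' C, ⇑g' '' D, ⟨eC.trans (g.imageIso C).toOrderEmbedding⟩,
      ⟨eD.trans (g'.imageIso D).toOrderEmbedding⟩, ?_⟩
    rintro x ⟨a, ha, rfl⟩ y ⟨b, hb, rfl⟩
    exact hpos a ha b hb

end Helpers

/-- If the polarised partition relation `(σᵢ; τⱼ) → (σᵢ φ; τⱼ ψ)` holds for all `i < k`
and `j < m`, then `(Σσᵢ; Στⱼ) → (Σσᵢ φ; Στⱼ ψ)` holds, where the sums are lexicographic. -/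
theorem stmt_7 (k m : ℕ) (F P : Type*) [LinearOrder F] [LinearOrder P]
    (S : Fin k → Type*) (T : Fin m → Type*)
    [∀ i, LinearOrder (S i)] [∀ j, LinearOrder (T j)]
    (h : ∀ (i : Fin k) (j : Fin m), ∀ E : Set (S i × T j),
      (∃ (C : Set (S i)) (D : Set (T j)), Nonempty (S i ≃o ↥C) ∧ Nonempty (T j ≃o ↥D) ∧
        ∀ x ∈ C, ∀ y ∈ D, (x, y) ∉ E) ∨
      (∃ (C : Set (S i)) (D : Set (T j)), Nonempty (F ↪o ↥C) ∧ Nonempty (P ↪o ↥D) ∧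
        ∀ x ∈ C, ∀ y ∈ D, (x, y) ∈ E)) :
    ∀ E : Set ((Σₗ i, S i) × (Σₗ j, T j)),
      (∃ (C : Set (Σₗ i, S i)) (D : Set (Σₗ j, T j)),
        Nonempty ((Σₗ i, S i) ≃o ↥C) ∧ Nonempty ((Σₗ j, T j) ≃o ↥D) ∧
        ∀ x ∈ C, ∀ y ∈ D, (x, y) ∉ E) ∨
      (∃ (C : Set (Σₗ i, S i)) (D : Set (Σₗ j, T j)),
        Nonempty (F ↪o ↥C) ∧ Nonempty (P ↪o ↥D) ∧
        ∀ x ∈ C, ∀ y ∈ D, (x, y) ∈ E) := by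
  intro E
  have key : ∀ L : List (Fin k × Fin m),
      (∃ (C : ∀ i, Set (S i)) (D : ∀ j, Set (T j)),
        (∀ i, Nonempty (S i ≃o ↥(C i))) ∧ (∀ j, Nonempty (T j ≃o ↥(D j))) ∧
        ∀ p ∈ L, ∀ x ∈ C p.1, ∀ y ∈ D p.2,
          (toLex (⟨p.1, x⟩ : Σ i, S i), toLex (⟨p.2, y⟩ : Σ j, T j)) ∉ E) ∨
      (∃ (C : Set (Σₗ i, S i)) (D : Set (Σₗ j, T j)),
        Nonempty (F ↪o ↥C) ∧ Nonempty (P ↪o ↥D) ∧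
        ∀ x ∈ C, ∀ y ∈ D, (x, y) ∈ E) := by
    intro L
    induction L with
    | nil =>
      exact Or.inl ⟨fun _ => Set.univ, fun _ => Set.univ,
        fun _ => ⟨OrderIso.Set.univ.symm⟩, fun _ => ⟨OrderIso.Set.univ.symm⟩, by simp⟩
    | cons p L ih =>
      rcases ih with ⟨C, D, hC, hD, hneg⟩ | hpos
      · obtain ⟨i, j⟩ := p
        rcases refine_step (h i j) (C i) (D j) (hC i).some (hD j).some
            {q | (toLex (⟨i, q.1⟩ : Σ i, S i), toLex (⟨j, q.2⟩ : Σ j, T j)) ∈ E} with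
          ⟨C', hC'sub, D', hD'sub, hC', hD', hne⟩ | ⟨C', D', hFe, hPe, hpo⟩
        · refine Or.inl ⟨Function.update C i C', Function.update D j D', ?_, ?_, ?_⟩
          · intro i'
            rcases eq_or_ne i' i with rfl | hi
            · rw [Function.update_self]; exact hC'
            · rw [Function.update_of_ne hi]; exact hC i'
          · intro j'
            rcases eq_or_ne j' j with rfl | hj
            · rw [Function.update_self]; exact hD'
            · rw [Function.update_of_ne hj]; exact hD j'
          · have hsubC : ∀ i', Function.update C i C' i' ⊆ C i' := by
              intro i'
              rcases eq_or_ne i' i with rfl | hi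
              · rw [Function.update_self]; exact hC'sub
              · rw [Function.update_of_ne hi]
            have hsubD : ∀ j', Function.update D j D' j' ⊆ D j' := by
              intro j'
              rcases eq_or_ne j' j with rfl | hj
              · rw [Function.update_self]; exact hD'sub
              · rw [Function.update_of_ne hj]
            rintro q hq x hx y hy
            rcases List.mem_cons.1 hq with rfl | hq
            · rw [Function.update_self] at hx hy
              exact hne x hx y hy
            · exact hneg q hq x (hsubC q.1 hx) y (hsubD q.2 hy)
        · refine Or.inr ⟨⇑(sigmaLexMk (A := S) i) '' C', ⇑(sigmaLexMk (A := T) j) '' D',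
            ⟨hFe.some.trans ((sigmaLexMk i).imageIso C').toOrderEmbedding⟩,
            ⟨hPe.some.trans ((sigmaLexMk j).imageIso D').toOrderEmbedding⟩, ?_⟩
          rintro x ⟨a, ha, rfl⟩ y ⟨b, hb, rfl⟩
          exact hpo a ha b hb
      · exact Or.inr hpos
  rcases key ((List.finRange k).product (List.finRange m)) with ⟨C, D, hC, hD, hneg⟩ | hpos
  · refine Or.inl ⟨{p : Σₗ i, S i | (ofLex p).2 ∈ C (ofLex p).1},
      {q : Σₗ j, T j | (ofLex q).2 ∈ D (ofLex q).1},
      ⟨(sigmaLexCongr fun i => (hC i).some).trans (sigmaLexSubtypeIso C)⟩,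
      ⟨(sigmaLexCongr fun j => (hD j).some).trans (sigmaLexSubtypeIso D)⟩, ?_⟩
    rintro ⟨i, a⟩ hx ⟨j, b⟩ hy
    exact hneg (i, j)
      (List.mem_product.2 ⟨List.mem_finRange i, List.mem_finRange j⟩) a hx b hy
  · exact Or.inr hpos
end

section
/- Let κ be an infinite cardinal of uncountable cofinality with κ < 𝔰_{ℵ₀}, and let K be a set of cardinality κ. For every colouring c : K × ℕ → {0,1} there exist a colour i ∈ {0,1}, a set A ⊆ K with |A| = κ, and an infinite set D ⊆ ℕ such that c(a,d) = i for all a ∈ A and d ∈ D. This is the polarised partition relation (κ; ω) → (κ; ω)₂. -/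
open Cardinal Ordinal

/-- `x` splits `y` if both `y ∩ x` and `y \ x` are infinite. -/
def Splits (x y : Set ℕ) : Prop := (y ∩ x).Infinite ∧ (y \ x).Infinite

/-- The countably splitting number `𝔰_{ℵ₀}`: the least cardinality of a family `F` of
subsets of `ℕ` such that for every countable collection `X` of infinite subsets of `ℕ`
some single member of `F` splits every element of `X`. -/
noncomputable def countablySplittingNumber : Cardinal :=
  sInf { c : Cardinal | ∃ F : Set (Set ℕ), #F = c ∧
    ∀ X : Set (Set ℕ), X.Countable → (∀ y ∈ X, y.Infinite) →
      ∃ x ∈ F, ∀ y ∈ X, Splits x y }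

/-- If `κ` is an infinite cardinal of uncountable cofinality with `κ < 𝔰_{ℵ₀}`, then
the polarised partition relation `(κ; ω) → (κ; ω)₂` holds. -/
theorem stmt_10 (κ : Cardinal) (hκ : ℵ₀ ≤ κ) (hcof : ℵ₀ < κ.ord.cof)
    (hs : κ < countablySplittingNumber)
    (K : Type) (hK : #K = κ) (c : K → ℕ → Fin 2) :
    ∃ (i : Fin 2) (A : Set K) (D : Set ℕ),
      #A = κ ∧ D.Infinite ∧ ∀ a ∈ A, ∀ d ∈ D, c a d = i := by
  classical
  set x : K → Set ℕ := fun a => {n | c a n = 0} with hxdef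
  have hnot : ¬ ∀ X : Set (Set ℕ), X.Countable → (∀ y ∈ X, y.Infinite) →
      ∃ z ∈ Set.range x, ∀ y ∈ X, Splits z y := by
    intro h
    have h1 : countablySplittingNumber ≤ #(Set.range x) :=
      csInf_le' ⟨Set.range x, rfl, h⟩
    have h2 : #(Set.range x) ≤ κ := hK ▸ Cardinal.mk_range_le
    exact absurd (h1.trans h2) (not_le.2 hs)
  push_neg at hnot
  obtain ⟨X, hXc, hXinf, hX⟩ := hnot
  have key : ∀ a : K, ∃ y ∈ X, (y ∩ x a).Finite ∨ (y \ x a).Finite := by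
    intro a
    obtain ⟨yy, hy, hns⟩ := hX (x a) ⟨a, rfl⟩
    refine ⟨yy, hy, ?_⟩
    by_contra h
    push_neg at h
    exact hns ⟨h.1, h.2⟩
  choose y hyX hfin using key
  have : Countable ↥X := hXc.to_subtype
  let f : K → ↥X × Fin 2 × Finset ℕ := fun a =>
    if h : (y a ∩ x a).Finite then (⟨y a, hyX a⟩, 0, h.toFinset)
    else (⟨y a, hyX a⟩, 1, ((hfin a).resolve_left h).toFinset)
  have hcard : #(↥X × Fin 2 × Finset ℕ) < (#K).ord.cof := by
    have hle : #(↥X × Fin 2 × Finset ℕ) ≤ ℵ₀ := Cardinal.mk_le_aleph0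
    rw [hK]; exact hle.trans_lt hcof
  obtain ⟨⟨⟨y0, hy0⟩, i, s⟩, hfib⟩ :=
    Cardinal.infinite_pigeonhole f (hK ▸ hκ) hcard
  refine ⟨1 - i, f ⁻¹' {(⟨y0, hy0⟩, i, s)}, y0 \ ↑s, hK ▸ hfib,
    (hXinf y0 hy0).diff s.finite_toSet, ?_⟩
  intro a ha d hd
  have ha' : f a = (⟨y0, hy0⟩, i, s) := ha
  by_cases h : (y a ∩ x a).Finite
  · simp only [f, dif_pos h, Prod.mk.injEq, Subtype.mk.injEq] at ha'
    obtain ⟨h1, h2, h3⟩ := ha'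
    subst h1; subst h2
    -- s = h.toFinset, i = 0; show c a d = 1
    have hd1 : d ∈ y a := hd.1
    have hd2 : d ∉ x a := by
      intro hx
      exact hd.2 (by rw [← h3]; exact h.mem_toFinset.mpr ⟨hd1, hx⟩)
    have : c a d ≠ 0 := hd2
    show c a d = 1 - 0
    omega
  · simp only [f, dif_neg h, Prod.mk.injEq, Subtype.mk.injEq] at ha'
    obtain ⟨h1, h2, h3⟩ := ha'
    subst h1; subst h2
    have hd1 : d ∈ y a := hd.1
    have hd2 : d ∈ x a := by
      by_contra hx
      exact hd.2 (by rw [← h3]; exact (Set.Finite.mem_toFinset _).mpr ⟨hd1, hx⟩)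
    have : c a d = 0 := hd2
    show c a d = 1 - 1
    omega
end

section
/- Let κ ≤ 𝔠 be a cardinal of uncountable cofinality, where 𝔠 is the cardinality of the continuum, and let α be an ordinal with α < 𝔱 and α < cf(κ). Let K be the set of ordinals below the initial ordinal of κ. For every colouring c : K × ℕ → {0,1}, either there exist A ⊆ K with |A| = κ and an infinite set D ⊆ ℕ such that c is constantly 0 on A × D, or there exist A ⊆ K of order type α and an infinite set D ⊆ ℕ such that c is constantly 1 on A × D. This is the polarised partition relation (κ; ω) → (κ α; ω ω). -/
open Cardinal Ordinal

/-- The tower number `𝔱`, as an ordinal: the least ordinal `δ` such that there is a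
sequence `⟨x ξ : ξ < δ⟩` of infinite subsets of `ℕ` with `x β \ x γ` finite whenever
`γ < β < δ`, for which no infinite `y ⊆ ℕ` satisfies that `y \ x ξ` is finite for
all `ξ < δ`. -/
noncomputable def towerNumber : Ordinal :=
  sInf { δ : Ordinal | ∃ x : Ordinal → Set ℕ,
    (∀ ξ < δ, (x ξ).Infinite) ∧
    (∀ γ β, γ < β → β < δ → (x β \ x γ).Finite) ∧
    ¬ ∃ y : Set ℕ, y.Infinite ∧ ∀ ξ < δ, (y \ x ξ).Finite }

namespace ST12

open Set

/-- Unbounded subset of the ordinals below `o`. -/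
def Unbdd (o : Ordinal) (S : Set Ordinal) : Prop :=
  ∀ β < o, ∃ b, b ∈ S ∧ β < b ∧ b < o

/-- The key richness condition: below any bound there are unboundedly many rows `b`
whose set `E b` contains `F` and meets every infinite subset of `D` infinitely. -/
def Rr (o : Ordinal) (E : Ordinal → Set ℕ) (F D : Set ℕ) : Prop :=
  ∀ D', D' ⊆ D → D'.Infinite → Unbdd o {b | F ⊆ E b ∧ (E b ∩ D').Infinite}

theorem Rr.mono {o E F D D'} (h : Rr o E F D) (hs : D' ⊆ D) : Rr o E F D' :=
  fun X hX hXinf => h X (hX.trans hs) hXinf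

/-- Every `⊆*`-decreasing chain of infinite sets of length `< towerNumber` has an
infinite pseudo-intersection. -/
theorem tower_ext {δ : Ordinal} (hδ : δ < towerNumber) (x : Ordinal → Set ℕ)
    (h1 : ∀ ξ < δ, (x ξ).Infinite) (h2 : ∀ γ β, γ < β → β < δ → (x β \ x γ).Finite) :
    ∃ y : Set ℕ, y.Infinite ∧ ∀ ξ < δ, (y \ x ξ).Finite := by
  by_contra h
  have hmem : δ ∈ { δ : Ordinal | ∃ x : Ordinal → Set ℕ,
      (∀ ξ < δ, (x ξ).Infinite) ∧
      (∀ γ β, γ < β → β < δ → (x β \ x γ).Finite) ∧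
      ¬ ∃ y : Set ℕ, y.Infinite ∧ ∀ ξ < δ, (y \ x ξ).Finite } := ⟨x, h1, h2, h⟩
  exact absurd (csInf_le (OrderBot.bddBelow _) hmem) (not_le.2 hδ)

/-- Bounding a small family of ordinals below `o`, together with a seed bound. -/
theorem bddf {o α : Ordinal} (hα : α.card < o.cof) (g : Ordinal → Ordinal)
    (hg : ∀ β < α, g β < o) {β₀ : Ordinal} (hβ₀ : β₀ < o) :
    ∃ B, β₀ ≤ B ∧ B < o ∧ ∀ β < α, g β ≤ B := by
  have hb : Ordinal.bsup α (fun β _ => g β) < o :=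
    Ordinal.bsup_lt_ord hα (fun i h => hg i h)
  exact ⟨max β₀ (Ordinal.bsup α (fun β _ => g β)), le_max_left _ _,
    max_lt hβ₀ hb, fun β hβ => (Ordinal.le_bsup (fun β _ => g β) β hβ).trans (le_max_right _ _)⟩

/-- Bounding countably many ordinals below an `o` of uncountable cofinality. -/
theorem bddnat {o : Ordinal} (hcof : ℵ₀ < o.cof) (g : ℕ → Ordinal)
    (hg : ∀ n, g n < o) : ∃ B, B < o ∧ ∀ n, g n ≤ B := by
  have hb : (⨆ n, g n) < o := Ordinal.iSup_lt_ord_lift (c := o) (by rw [mk_nat, Cardinal.lift_aleph0]; exact hcof) hg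
  exact ⟨_, hb, fun n => Ordinal.le_iSup g n⟩

/-- Pigeonhole: a ℕ-valued function on the ordinals below `θ` (of uncountable cofinality)
has some value attained unboundedly often. -/
theorem pigeon {θ : Ordinal} (hθ : ℵ₀ < θ.cof) (e : Ordinal → ℕ) :
    ∃ m : ℕ, ∀ i < θ, ∃ j, i ≤ j ∧ j < θ ∧ e j = m := by
  by_contra h
  push_neg at h
  choose i hi hbad using h
  obtain ⟨B, hB, hBs⟩ := bddnat hθ (fun m => i m) (fun m => hi m)
  exact hbad (e B) B (hBs (e B)) hB rfl

/-- The commitment lemma: if `Rr o E F D`, then arbitrarily large `k ∈ D` can be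
added to `F` while preserving the richness condition on some infinite subset. -/
theorem commit {o : Ordinal} {E : Ordinal → Set ℕ} {F D : Set ℕ}
    (hcof : ℵ₀ < o.cof) (hR : Rr o E F D) (hD : D.Infinite) (m : ℕ) :
    ∃ k ∈ D, m < k ∧ ∃ D'', D'' ⊆ D ∧ D''.Infinite ∧ Rr o E (insert k F) D'' := by
  by_contra hcon
  push_neg at hcon
  have step : ∀ W : Set ℕ, W ⊆ D → W.Infinite → ∀ j : ℕ,
      ∃ p : ℕ × Set ℕ × Ordinal, p.1 ∈ W ∧ j < p.1 ∧ m < p.1 ∧ p.2.1 ⊆ W ∧ p.2.1.Infinite ∧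
        (∀ n ∈ p.2.1, p.1 < n) ∧ p.2.2 < o ∧
        ∀ b, p.2.2 < b → b < o → ¬(insert p.1 F ⊆ E b ∧ (E b ∩ p.2.1).Infinite) := by
    intro W hWD hWinf j
    obtain ⟨k, hkW, hk2⟩ := (hWinf.diff (Set.finite_Iic (max j m))).nonempty
    have hk' : max j m < k := by simpa using hk2
    have hjk : j < k := lt_of_le_of_lt (le_max_left _ _) hk'
    have hmk : m < k := lt_of_le_of_lt (le_max_right _ _) hk' 
    have hW'sub : (W \ Set.Iic k) ⊆ D := fun n hn => hWD hn.1
    have hW'inf : (W \ Set.Iic k).Infinite := hWinf.diff (Set.finite_Iic k)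
    have hnr := hcon k (hWD hkW) hmk _ hW'sub hW'inf
    unfold Rr Unbdd at hnr
    push_neg at hnr
    obtain ⟨D', hD'sub, hD'inf, β, hβ, hbad⟩ := hnr
    refine ⟨(k, D', β), hkW, hjk, hmk, fun n hn => (hD'sub hn).1, hD'inf,
      fun n hn => by simpa using (hD'sub hn).2, hβ, fun b hb1 hb2 hmem => ?_⟩
    exact absurd hb2 (not_lt.2 (hbad b hmem hb1))
  -- build the diagonal sequence
  let T := {p : ℕ × Set ℕ × Ordinal // p.1 ∈ D ∧ m < p.1 ∧ p.2.1 ⊆ D ∧ p.2.1.Infinite ∧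
      (∀ n ∈ p.2.1, p.1 < n) ∧ p.2.2 < o ∧
      ∀ b, p.2.2 < b → b < o → ¬(insert p.1 F ⊆ E b ∧ (E b ∩ p.2.1).Infinite)}
  have init : ∃ s : T, True := by
    obtain ⟨p, h1, h2, h3, h4, h5, h6, h7, h8⟩ := step D subset_rfl hD m
    exact ⟨⟨p, h1, h3, h4, h5, h6, h7, h8⟩, trivial⟩
  obtain ⟨s0, -⟩ := init
  have hG : ∀ s : T, ∃ t : T, t.val.1 ∈ s.val.2.1 ∧ t.val.2.1 ⊆ s.val.2.1 ∧
      s.val.1 < t.val.1 := by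
    intro s
    obtain ⟨hkD, hmk, hZD, hZinf, hZgt, hβo, hbad⟩ := s.property
    obtain ⟨p, h1, h2, h3, h4, h5, h6, h7, h8⟩ := step s.val.2.1 hZD hZinf s.val.1
    exact ⟨⟨p, hZD h1, h3, h4.trans hZD, h5, h6, h7, h8⟩, h1, h4, h2⟩
  choose G hG1 hG2 hG3 using hG
  let seq : ℕ → T := fun n => Nat.rec s0 (fun _ s => G s) n
  have hseqsucc : ∀ n, seq (n + 1) = G (seq n) := fun n => rfl
  set k : ℕ → ℕ := fun n => (seq n).val.1 with hk
  set Z : ℕ → Set ℕ := fun n => (seq n).val.2.1 with hZ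
  have hkmono : StrictMono k := by
    apply strictMono_nat_of_lt_succ
    intro n
    have := hG3 (seq n)
    rw [← hseqsucc n] at this
    exact this
  have hZmono : ∀ i j, i ≤ j → Z j ⊆ Z i := by
    intro i j hij
    induction j with
    | zero => cases Nat.le_zero.1 hij; exact subset_rfl
    | succ n ih =>
      rcases Nat.lt_or_ge i (n+1) with h | h
      · have h2 := hG2 (seq n)
        rw [← hseqsucc n] at h2
        exact h2.trans (ih (Nat.lt_succ_iff.1 h))
      · have : i = n + 1 := le_antisymm hij h
        subst this; exact subset_rfl
  have hkZ : ∀ i j, i < j → k j ∈ Z i := by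
    intro i j hij
    obtain ⟨n, rfl⟩ := Nat.exists_eq_add_of_lt hij
    have h1 := hG1 (seq (i + n))
    rw [← hseqsucc (i + n)] at h1
    exact hZmono i (i + n) (Nat.le_add_right _ _) h1
  have hWD : Set.range k ⊆ D := by
    rintro _ ⟨n, rfl⟩; exact (seq n).property.1
  have hWinf : (Set.range k).Infinite := Set.infinite_range_of_injective hkmono.injective
  obtain ⟨B, hBo, hBs⟩ := bddnat hcof (fun n => (seq n).val.2.2) (fun n => (seq n).property.2.2.2.2.2.1)
  obtain ⟨b, hbS, hBb, hbo⟩ := hR (Set.range k) hWD hWinf B hBo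
  obtain ⟨hFb, hEbW⟩ := hbS
  obtain ⟨x, ⟨hxE, i, rfl⟩⟩ := hEbW.nonempty
  have hbadi := (seq i).property.2.2.2.2.2.2 b (lt_of_le_of_lt (hBs i) hBb) hbo
  apply hbadi
  constructor
  · intro n hn
    rcases Set.mem_insert_iff.1 hn with h | h
    · rwa [h]
    · exact hFb h
  · have hsub : (E b ∩ Set.range k) \ Set.Iic (k i) ⊆ E b ∩ Z i := by
      rintro x ⟨⟨hxE', j, rfl⟩, hgt⟩
      simp only [Set.mem_Iic, not_le] at hgt
      have hij : i < j := by
        by_contra hcontra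
        push_neg at hcontra
        exact absurd (hkmono.le_iff_le.2 hcontra) (not_le.2 hgt)
      exact ⟨hxE', hkZ i j hij⟩
    exact ((hEbW.diff (Set.finite_Iic (k i))).mono hsub)

/-- The main construction. -/
theorem Pmain {o : Ordinal} {E : Ordinal → Set ℕ} (hcof : ℵ₀ < o.cof) :
    ∀ α : Ordinal, α < towerNumber → α.card < o.cof →
    ∀ F D₀ : Set ℕ, ∀ β₀ : Ordinal, F.Finite → D₀.Infinite → Rr o E F D₀ → β₀ < o →
    ∃ (g : Ordinal → Ordinal) (D : Set ℕ), D ⊆ D₀ ∧ D.Infinite ∧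
      (∀ γ β, γ < β → β < α → g γ < g β) ∧
      (∀ β, β < α → β₀ < g β ∧ g β < o ∧ F ⊆ E (g β) ∧ D ⊆ E (g β)) := by
  intro α
  induction α using Ordinal.induction with
  | _ α IH =>
  intro hα1 hα2 F D₀ β₀ hF hD₀ hR hβ₀
  classical
  rcases Ordinal.zero_or_succ_or_isSuccLimit α with h0 | ⟨β, hsucc⟩ | hlim
  · subst h0
    exact ⟨id, D₀, subset_rfl, hD₀, fun γ β _ hβ => absurd hβ (by simp : ¬ β < 0),
      fun β hβ => absurd hβ (by simp : ¬ β < 0)⟩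
  · subst hsucc
    have hβlt : β < Order.succ β := Order.lt_succ β
    obtain ⟨g', D', hD'sub, hD'inf, hg'mono, hg'prop⟩ :=
      IH β hβlt (hβlt.trans hα1) (lt_of_le_of_lt (Ordinal.card_le_card hβlt.le) hα2)
        F D₀ β₀ hF hD₀ hR hβ₀
    obtain ⟨B, hBβ₀, hBo, hBub⟩ := bddf (lt_of_le_of_lt (Ordinal.card_le_card hβlt.le) hα2)
      g' (fun γ hγ => (hg'prop γ hγ).2.1) hβ₀
    obtain ⟨b, ⟨hFb, hEbD'⟩, hBb, hbo⟩ := (hR.mono hD'sub) D' subset_rfl hD'inf B hBo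
    refine ⟨fun γ => if γ = β then b else g' γ, D' ∩ E b, (Set.inter_subset_left).trans hD'sub,
      by rw [Set.inter_comm]; exact hEbD', ?_, ?_⟩
    · intro γ β' hγβ' hβ'
      rcases (Order.lt_succ_iff.1 hβ').lt_or_eq with h | h
      · have hγβ : γ < β := hγβ'.trans h
        simp only [if_neg (ne_of_lt hγβ), if_neg (ne_of_lt h)]
        exact hg'mono γ β' hγβ' h
      · subst h
        have hγ : γ ≠ β' := ne_of_lt hγβ'
        simp only [if_pos rfl, if_neg hγ]
        exact lt_of_le_of_lt (hBub γ hγβ') hBb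
    · intro β' hβ'
      rcases (Order.lt_succ_iff.1 hβ').lt_or_eq with h | h
      · simp only [if_neg (ne_of_lt h)]
        obtain ⟨h1, h2, h3, h4⟩ := hg'prop β' h
        exact ⟨h1, h2, h3, (Set.inter_subset_left).trans h4⟩
      · subst h
        simp only [if_pos rfl]
        exact ⟨lt_of_le_of_lt hBβ₀ hBb, hbo, hFb, Set.inter_subset_right⟩
  · have hcfle : ℵ₀ ≤ α.cof := Ordinal.aleph0_le_cof.2 hlim
    rcases hcfle.lt_or_eq with hbig | hom
    · -- uncountable cofinality
      set θ : Ordinal := α.cof.ord with hθdef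
      obtain ⟨f, hf⟩ := Ordinal.exists_fundamental_sequence α
      have hθα : θ ≤ α := Ordinal.ord_cof_le α
      have hθcof : ℵ₀ < θ.cof := by rw [hθdef, Ordinal.cof_cof]; exact hbig
      set fα : Ordinal → Ordinal := fun i => if h : i < θ then f i h else 0 with hfα
      have hfαlt : ∀ i, i < θ → fα i < α := by
        intro i hi; simp only [hfα, dif_pos hi]; exact hf.lt hi
      have hfαmono : ∀ i j, i < j → j < θ → fα i < fα j := by
        intro i j hij hj
        simp only [hfα, dif_pos hj, dif_pos (hij.trans hj)]
        exact hf.strict_mono _ _ hij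
      have hfαcof : ∀ β, β < α → ∃ j, j < θ ∧ β ≤ fα j := by
        intro β hβ
        rw [← hf.blsub_eq, Ordinal.lt_blsub_iff] at hβ
        obtain ⟨i, hi, hle⟩ := hβ
        exact ⟨i, hi, by simp only [hfα, dif_pos (show i < θ from hi)]; exact hle⟩
      -- the recursion
      set DStep : ∀ i : Ordinal, (∀ j, j < i →
          Set ℕ × (Ordinal → Ordinal) × Set ℕ × Ordinal × Ordinal) → Set ℕ :=
        fun i rec =>
          if h : ∃ y : Set ℕ, y.Infinite ∧ y ⊆ D₀ ∧ ∀ j (hj : j < i), (y \ (rec j hj).2.2.1).Finite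
          then h.choose else Set.univ with hDStep
      set BStep : ∀ i : Ordinal, (∀ j, j < i →
          Set ℕ × (Ordinal → Ordinal) × Set ℕ × Ordinal × Ordinal) → Set ℕ →
          (Ordinal → Ordinal) × Set ℕ × Ordinal × Ordinal :=
        fun i rec Dc =>
          if h : ∃ p : (Ordinal → Ordinal) × Set ℕ × Ordinal × Ordinal,
            p.2.1 ⊆ Dc ∧ p.2.1.Infinite ∧
            (∀ γ' β', γ' < β' → β' < fα i → p.1 γ' < p.1 β') ∧
            (∀ β', β' < fα i → p.2.2.1 < p.1 β' ∧ p.1 β' ≤ p.2.2.2 ∧ p.1 β' < o ∧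
              F ⊆ E (p.1 β') ∧ p.2.1 ⊆ E (p.1 β')) ∧
            β₀ ≤ p.2.2.1 ∧ p.2.2.2 < o ∧ ∀ j (hj : j < i), (rec j hj).2.2.2.2 ≤ p.2.2.1
          then h.choose else (fun _ => 0, Set.univ, 0, 0) with hBStep
      set H : Ordinal → Set ℕ × (Ordinal → Ordinal) × Set ℕ × Ordinal × Ordinal :=
        fun i => WellFounded.fix Ordinal.lt_wf
          (fun i rec => (DStep i rec, BStep i rec (DStep i rec))) i with hH
      have hHeq : ∀ i, H i = (DStep i (fun j _ => H j),
          BStep i (fun j _ => H j) (DStep i (fun j _ => H j))) := by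
        intro i
        rw [hH]
        exact WellFounded.fix_eq _ _ i
      have hH1 : ∀ i, (H i).1 = DStep i (fun j _ => H j) := fun i => by rw [hHeq i]
      have hH2 : ∀ i, (H i).2 = BStep i (fun j _ => H j) ((H i).1) := fun i => by
        conv_lhs => rw [hHeq i]
        rw [hH1 i]
      -- the invariant
      have Inv : ∀ i, i ≤ θ →
          ((H i).1.Infinite ∧ (H i).1 ⊆ D₀ ∧
            (∀ j, j < i → ((H i).1 \ (H j).2.2.1).Finite)) ∧
          (i < θ → ((H i).2.2.1 ⊆ (H i).1 ∧ (H i).2.2.1.Infinite ∧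
            (∀ γ' β', γ' < β' → β' < fα i → (H i).2.1 γ' < (H i).2.1 β') ∧
            (∀ β', β' < fα i → (H i).2.2.2.1 < (H i).2.1 β' ∧
              (H i).2.1 β' ≤ (H i).2.2.2.2 ∧ (H i).2.1 β' < o ∧
              F ⊆ E ((H i).2.1 β') ∧ (H i).2.2.1 ⊆ E ((H i).2.1 β')) ∧
            β₀ ≤ (H i).2.2.2.1 ∧ (H i).2.2.2.2 < o ∧
            ∀ j, j < i → (H j).2.2.2.2 ≤ (H i).2.2.2.1)) := by
        intro i
        induction i using Ordinal.induction with
        | _ i IHi =>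
        intro hiθ
        -- the chain part
        have hguard : ∃ y : Set ℕ, y.Infinite ∧ y ⊆ D₀ ∧
            ∀ j (hj : j < i), (y \ (H j).2.2.1).Finite := by
          rcases eq_or_ne i 0 with rfl | hi0
          · exact ⟨D₀, hD₀, subset_rfl, fun j hj => absurd hj (by simp : ¬ j < 0)⟩
          · have hipos : 0 < i := pos_iff_ne_zero.2 hi0
            obtain ⟨y, hyinf, hy⟩ := tower_ext
              (lt_of_le_of_lt (hiθ.trans hθα) hα1) (fun j => (H j).2.2.1)
              (fun ξ hξ => ((IHi ξ hξ (hξ.le.trans hiθ)).2 (lt_of_lt_of_le hξ hiθ)).2.1)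
              (by
                intro γ' β' hγβ hβi
                have hblkβ := (IHi β' hβi (hβi.le.trans hiθ)).2 (lt_of_lt_of_le hβi hiθ)
                have hchainβ := (IHi β' hβi (hβi.le.trans hiθ)).1
                exact (hchainβ.2.2 γ' hγβ).subset (Set.diff_subset_diff_left hblkβ.1))
            have hyD : (y \ D₀).Finite := by
              have h0θ : (0 : Ordinal) < θ := lt_of_lt_of_le hipos hiθ
              have hblk0 := (IHi 0 hipos (le_of_lt (lt_of_lt_of_le hipos hiθ))).2 h0θ
              have hchain0 := (IHi 0 hipos (le_of_lt (lt_of_lt_of_le hipos hiθ))).1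
              exact ((hy 0 hipos).subset (Set.diff_subset_diff_right
                ((hblk0.1.trans hchain0.2.1))))
            refine ⟨y ∩ D₀, ?_, Set.inter_subset_right, ?_⟩
            · have : y \ (y \ D₀) ⊆ y ∩ D₀ := by
                intro x hx
                exact ⟨hx.1, by_contra fun hc => hx.2 ⟨hx.1, hc⟩⟩
              exact (hyinf.diff hyD).mono this
            · intro j hj
              exact (hy j hj).subset (Set.diff_subset_diff_left Set.inter_subset_left)
        have hchain : (H i).1.Infinite ∧ (H i).1 ⊆ D₀ ∧
            (∀ j, j < i → ((H i).1 \ (H j).2.2.1).Finite) := by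
          rw [hH1 i]
          simp only [hDStep]
          rw [dif_pos hguard]
          exact ⟨hguard.choose_spec.1, hguard.choose_spec.2.1,
            fun j hj => hguard.choose_spec.2.2 j hj⟩
        refine ⟨hchain, ?_⟩
        intro hiθ'
        -- the block part
        have hcardi : i.card < o.cof := by
          refine lt_of_le_of_lt ?_ hα2
          calc i.card ≤ θ.card := Ordinal.card_le_card hiθ
          _ = α.cof := by rw [hθdef, Cardinal.card_ord]
          _ ≤ α.card := Ordinal.cof_le_card α
        have hcardf : (fα i).card < o.cof :=
          lt_of_le_of_lt (Ordinal.card_le_card (hfαlt i hiθ').le) hα2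
        obtain ⟨B, hBβ₀, hBo, hBub⟩ := bddf hcardi (fun j => (H j).2.2.2.2)
          (fun j hj => ((IHi j hj (hj.le.trans hiθ)).2 (lt_of_lt_of_le hj hiθ)).2.2.2.2.2.1) hβ₀
        obtain ⟨g, W, hWsub, hWinf, hgmono, hgprop⟩ :=
          IH (fα i) (hfαlt i hiθ') ((hfαlt i hiθ').trans hα1) hcardf
            F (H i).1 B hF hchain.1 (hR.mono hchain.2.1) hBo
        obtain ⟨B', hBB', hB'o, hB'ub⟩ := bddf hcardf g
          (fun β' hβ' => (hgprop β' hβ').2.1) hBo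
        have hblkguard : ∃ p : (Ordinal → Ordinal) × Set ℕ × Ordinal × Ordinal,
            p.2.1 ⊆ (H i).1 ∧ p.2.1.Infinite ∧
            (∀ γ' β', γ' < β' → β' < fα i → p.1 γ' < p.1 β') ∧
            (∀ β', β' < fα i → p.2.2.1 < p.1 β' ∧ p.1 β' ≤ p.2.2.2 ∧ p.1 β' < o ∧
              F ⊆ E (p.1 β') ∧ p.2.1 ⊆ E (p.1 β')) ∧
            β₀ ≤ p.2.2.1 ∧ p.2.2.2 < o ∧ ∀ j (hj : j < i), (H j).2.2.2.2 ≤ p.2.2.1 := by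
          refine ⟨(g, W, B, B'), hWsub, hWinf, hgmono, ?_, hBβ₀.trans' le_rfl, hB'o,
            fun j hj => hBub j hj⟩
          intro β' hβ'
          obtain ⟨h1, h2, h3, h4⟩ := hgprop β' hβ'
          exact ⟨h1, hB'ub β' hβ', h2, h3, h4⟩
        have : (H i).2 = BStep i (fun j _ => H j) ((H i).1) := hH2 i
        rw [this]
        simp only [hBStep]
        rw [dif_pos hblkguard]
        exact hblkguard.choose_spec
      -- extract the final data
      have hθθ : θ ≤ θ := le_rfl
      have hfin : ∀ i, i < θ → ((H θ).1 \ (H i).2.2.1).Finite :=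
        fun i hi => (Inv θ le_rfl).1.2.2 i hi
      have herr : ∀ i, i < θ → ∃ m : ℕ, ∀ x ∈ (H θ).1 \ (H i).2.2.1, x < m := by
        intro i hi
        obtain ⟨m, hm⟩ := (hfin i hi).bddAbove
        exact ⟨m + 1, fun x hx => Nat.lt_succ_of_le (hm hx)⟩
      set e : Ordinal → ℕ := fun i =>
        if h : ∃ m : ℕ, ∀ x ∈ (H θ).1 \ (H i).2.2.1, x < m then h.choose else 0 with he
      have hespec : ∀ i, i < θ → ∀ x ∈ (H θ).1 \ (H i).2.2.1, x < e i := by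
        intro i hi
        have h := herr i hi
        simp only [he, dif_pos h]
        exact h.choose_spec
      obtain ⟨m, hm⟩ := pigeon hθcof e
      have hθlim : Order.IsSuccLimit θ := Ordinal.aleph0_le_cof.1 hθcof.le
      have hyinf : (H θ).1.Infinite := (Inv θ le_rfl).1.1
      have hyD₀ : (H θ).1 ⊆ D₀ := (Inv θ le_rfl).1.2.1
      have hDfsub : ∀ i, i < θ → e i = m → ((H θ).1 \ Set.Iio m) ⊆ (H i).2.2.1 := by
        intro i hi hei x hx
        by_contra hc
        have hlt := hespec i hi x ⟨hx.1, hc⟩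
        rw [hei] at hlt
        exact hx.2 (Set.mem_Iio.2 hlt)
      have hSne : ∀ β, β < α → {i | i < θ ∧ e i = m ∧ β < fα i}.Nonempty := by
        intro β hβ
        obtain ⟨j, hj, hle⟩ := hfαcof β hβ
        obtain ⟨i, hji, hiθ2, hei⟩ := hm (Order.succ j) (hθlim.succ_lt hj)
        have hji' : j < i := lt_of_lt_of_le (Order.lt_succ j) hji
        exact ⟨i, hiθ2, hei, lt_of_le_of_lt hle (hfαmono j i hji' hiθ2)⟩
      refine ⟨fun β => (H (sInf {i | i < θ ∧ e i = m ∧ β < fα i})).2.1 β,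
        (H θ).1 \ Set.Iio m, (Set.diff_subset).trans hyD₀,
        hyinf.diff (Set.finite_Iio m), ?_, ?_⟩
      · intro γ β hγβ hβ
        show (H (sInf {i | i < θ ∧ e i = m ∧ γ < fα i})).2.1 γ <
          (H (sInf {i | i < θ ∧ e i = m ∧ β < fα i})).2.1 β
        have hSβ := hSne β hβ
        have hSγ := hSne γ (hγβ.trans hβ)
        have hmemβ := csInf_mem hSβ
        have hmemγ := csInf_mem hSγ
        obtain ⟨hβθ, hβe, hβf⟩ := hmemβ
        obtain ⟨hγθ, hγe, hγf⟩ := hmemγ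
        have hle : sInf {i | i < θ ∧ e i = m ∧ γ < fα i} ≤
            sInf {i | i < θ ∧ e i = m ∧ β < fα i} :=
          csInf_le_csInf (OrderBot.bddBelow _) hSβ
            (fun x hx => ⟨hx.1, hx.2.1, hγβ.trans hx.2.2⟩)
        obtain ⟨-, -, -, hpropsβ, -, -, hdomβ⟩ := (Inv _ hβθ.le).2 hβθ
        rcases hle.lt_or_eq with hlt | heq
        · obtain ⟨-, -, -, hpropsγ, -, -, -⟩ := (Inv _ hγθ.le).2 hγθ
          calc (H (sInf {i | i < θ ∧ e i = m ∧ γ < fα i})).2.1 γ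
              ≤ (H (sInf {i | i < θ ∧ e i = m ∧ γ < fα i})).2.2.2.2 := (hpropsγ γ hγf).2.1
            _ ≤ (H (sInf {i | i < θ ∧ e i = m ∧ β < fα i})).2.2.2.1 := hdomβ _ hlt
            _ < (H (sInf {i | i < θ ∧ e i = m ∧ β < fα i})).2.1 β := (hpropsβ β hβf).1
        · rw [heq]
          obtain ⟨-, -, hmono, -, -, -, -⟩ := (Inv _ hβθ.le).2 hβθ
          exact hmono γ β hγβ hβf
      · intro β hβ
        show β₀ < (H (sInf {i | i < θ ∧ e i = m ∧ β < fα i})).2.1 β ∧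
          (H (sInf {i | i < θ ∧ e i = m ∧ β < fα i})).2.1 β < o ∧
          F ⊆ E ((H (sInf {i | i < θ ∧ e i = m ∧ β < fα i})).2.1 β) ∧
          (H θ).1 \ Set.Iio m ⊆ E ((H (sInf {i | i < θ ∧ e i = m ∧ β < fα i})).2.1 β)
        have hSβ := hSne β hβ
        have hmemβ := csInf_mem hSβ
        obtain ⟨hβθ, hβe, hβf⟩ := hmemβ
        obtain ⟨hDwsub, -, -, hpropsβ, hβ₀lo, -, -⟩ := (Inv _ hβθ.le).2 hβθ
        obtain ⟨h1, h2, h3, h4, h5⟩ := hpropsβ β hβf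
        exact ⟨lt_of_le_of_lt hβ₀lo h1, h3, h4,
          (hDfsub _ hβθ hβe).trans h5⟩
    · -- countable cofinality
      obtain ⟨f, hf⟩ := Ordinal.exists_fundamental_sequence α
      have hcofω : α.cof.ord = Ordinal.omega0 := by rw [← hom, Cardinal.ord_aleph0]
      have hnlt : ∀ n : ℕ, (n : Ordinal) < α.cof.ord := by
        intro n; rw [hcofω]; exact Ordinal.nat_lt_omega0 n
      set fn : ℕ → Ordinal := fun n => f n (hnlt n) with hfn
      have fnmono : ∀ m n : ℕ, m < n → fn m < fn n := by
        intro m n hmn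
        exact hf.strict_mono (hnlt m) (hnlt n) (by exact_mod_cast hmn)
      have fnlt : ∀ n, fn n < α := fun n => hf.lt (hnlt n)
      have fncof : ∀ β, β < α → ∃ n : ℕ, β < fn n := by
        intro β hβ
        rw [← hf.blsub_eq, Ordinal.lt_blsub_iff] at hβ
        obtain ⟨i, hi, hle⟩ := hβ
        have hi' := hi
        rw [hcofω, Ordinal.lt_omega0] at hi'
        obtain ⟨n, rfl⟩ := hi'
        exact ⟨n + 1, lt_of_le_of_lt hle (hf.strict_mono hi (hnlt (n+1)) (by exact_mod_cast Nat.lt_succ_self n))⟩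
      -- the one-step construction
      have blockstep : ∀ γ, γ < α → ∀ q : Set ℕ × Set ℕ × Ordinal,
          (F ⊆ q.1 ∧ q.1.Finite ∧ q.2.1 ⊆ D₀ ∧ q.2.1.Infinite ∧ Rr o E q.1 q.2.1 ∧
            β₀ ≤ q.2.2 ∧ q.2.2 < o) →
          ∃ (g : Ordinal → Ordinal) (W : Set ℕ) (q' : Set ℕ × Set ℕ × Ordinal) (k : ℕ),
            W ⊆ q.2.1 ∧ W.Infinite ∧ (∀ γ' β', γ' < β' → β' < γ → g γ' < g β') ∧
            (∀ β', β' < γ → q.2.2 < g β' ∧ g β' ≤ q'.2.2 ∧ g β' < o ∧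
              q.1 ⊆ E (g β') ∧ W ⊆ E (g β')) ∧
            k ∈ W ∧ (∀ j ∈ q.1, j < k) ∧
            (F ⊆ q'.1 ∧ q'.1.Finite ∧ q'.2.1 ⊆ D₀ ∧ q'.2.1.Infinite ∧ Rr o E q'.1 q'.2.1 ∧
              β₀ ≤ q'.2.2 ∧ q'.2.2 < o) ∧
            q'.1 = insert k q.1 ∧ q'.2.1 ⊆ W ∧ q.2.2 ≤ q'.2.2 := by
        intro γ hγ q hq
        obtain ⟨hqF, hqFfin, hqD, hqDinf, hqR, hqb1, hqb2⟩ := hq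
        obtain ⟨g, W, hWsub, hWinf, hgmono, hgprop⟩ :=
          IH γ hγ (hγ.trans hα1) (lt_of_le_of_lt (Ordinal.card_le_card hγ.le) hα2)
            q.1 q.2.1 q.2.2 hqFfin hqDinf hqR hqb2
        obtain ⟨B, hB1, hB2, hB3⟩ := bddf (lt_of_le_of_lt (Ordinal.card_le_card hγ.le) hα2)
          g (fun β' hβ' => (hgprop β' hβ').2.1) hqb2
        obtain ⟨mF, hmF⟩ := hqFfin.bddAbove
        obtain ⟨k, hkW, hmk, D'', hD''W, hD''inf, hD''R⟩ :=
          commit hcof (hqR.mono hWsub) hWinf mF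
        refine ⟨g, W, (insert k q.1, D'', B), k, hWsub, hWinf, hgmono, ?_, hkW,
          fun j hj => lt_of_le_of_lt (hmF hj) hmk, ?_, rfl, hD''W, hB1⟩
        · intro β' hβ'
          obtain ⟨h1, h2, h3, h4⟩ := hgprop β' hβ'
          exact ⟨h1, hB3 β' hβ', h2, h3, h4⟩
        · refine ⟨hqF.trans (Set.subset_insert _ _), hqFfin.insert k,
            (hD''W.trans hWsub).trans hqD, hD''inf, hD''R, hqb1.trans hB1, hB2⟩
      choose bg bW bq' bk bh1 bh2 bh3 bh4 bh5 bh6 bh7 bh8 bh9 bh10 using blockstep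
      -- iterate
      let St := {q : Set ℕ × Set ℕ × Ordinal // F ⊆ q.1 ∧ q.1.Finite ∧ q.2.1 ⊆ D₀ ∧
        q.2.1.Infinite ∧ Rr o E q.1 q.2.1 ∧ β₀ ≤ q.2.2 ∧ q.2.2 < o}
      let s0 : St := ⟨(F, D₀, β₀), subset_rfl, hF, subset_rfl, hD₀, hR, le_rfl, hβ₀⟩
      let seq : ℕ → St := fun n => Nat.rec s0
        (fun n s => ⟨bq' (fn n) (fnlt n) s.val s.property,
          bh7 (fn n) (fnlt n) s.val s.property⟩) n
      have hseq : ∀ n : ℕ, (seq (n+1)).val = bq' (fn n) (fnlt n) (seq n).val (seq n).property :=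
        fun n => rfl
      set Fc : ℕ → Set ℕ := fun n => (seq n).val.1 with hFc
      set Dc : ℕ → Set ℕ := fun n => (seq n).val.2.1 with hDc
      set bnd : ℕ → Ordinal := fun n => (seq n).val.2.2 with hbnd
      set Bg : ℕ → Ordinal → Ordinal := fun n => bg (fn n) (fnlt n) (seq n).val (seq n).property
        with hBg
      set Bw : ℕ → Set ℕ := fun n => bW (fn n) (fnlt n) (seq n).val (seq n).property with hBw
      set k : ℕ → ℕ := fun n => bk (fn n) (fnlt n) (seq n).val (seq n).property with hk
      have hfact : ∀ n, Fc (n+1) = insert (k n) (Fc n) ∧ Dc (n+1) ⊆ Bw n ∧ Bw n ⊆ Dc n ∧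
          bnd n ≤ bnd (n+1) ∧ k n ∈ Bw n ∧ (∀ j ∈ Fc n, j < k n) := by
        intro n
        refine ⟨?_, ?_, bh1 (fn n) (fnlt n) (seq n).val (seq n).property, ?_,
          bh5 (fn n) (fnlt n) (seq n).val (seq n).property,
          bh6 (fn n) (fnlt n) (seq n).val (seq n).property⟩
        · show (bq' (fn n) (fnlt n) (seq n).val (seq n).property).1 = _
          exact bh8 (fn n) (fnlt n) (seq n).val (seq n).property
        · show (bq' (fn n) (fnlt n) (seq n).val (seq n).property).2.1 ⊆ _
          exact bh9 (fn n) (fnlt n) (seq n).val (seq n).property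
        · show (seq n).val.2.2 ≤ (bq' (fn n) (fnlt n) (seq n).val (seq n).property).2.2
          exact bh10 (fn n) (fnlt n) (seq n).val (seq n).property
      have hblk : ∀ n, (∀ γ' β', γ' < β' → β' < fn n → Bg n γ' < Bg n β') ∧
          (∀ β', β' < fn n → bnd n < Bg n β' ∧ Bg n β' ≤ bnd (n+1) ∧ Bg n β' < o ∧
            Fc n ⊆ E (Bg n β') ∧ Bw n ⊆ E (Bg n β')) := by
        intro n
        exact ⟨bh3 (fn n) (fnlt n) (seq n).val (seq n).property,
          bh4 (fn n) (fnlt n) (seq n).val (seq n).property⟩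
      have hbndmono : ∀ i j : ℕ, i ≤ j → bnd i ≤ bnd j := by
        intro i j hij
        induction j with
        | zero => cases Nat.le_zero.1 hij; exact le_rfl
        | succ n ih =>
          rcases Nat.lt_or_ge i (n+1) with h | h
          · exact (ih (Nat.lt_succ_iff.1 h)).trans (hfact n).2.2.2.1
          · cases le_antisymm hij h; exact le_rfl
      have hDcmono : ∀ i j : ℕ, i ≤ j → Dc j ⊆ Dc i := by
        intro i j hij
        induction j with
        | zero => cases Nat.le_zero.1 hij; exact subset_rfl
        | succ n ih =>
          rcases Nat.lt_or_ge i (n+1) with h | h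
          · exact (((hfact n).2.1).trans (hfact n).2.2.1).trans (ih (Nat.lt_succ_iff.1 h))
          · cases le_antisymm hij h; exact subset_rfl
      have hkFc : ∀ i j : ℕ, i < j → k i ∈ Fc j := by
        intro i j hij
        induction j with
        | zero => exact absurd hij (Nat.not_lt_zero i)
        | succ n ih =>
          rw [(hfact n).1]
          rcases Nat.lt_or_ge i n with h | h
          · exact Set.mem_insert_of_mem _ (ih h)
          · cases le_antisymm (Nat.lt_succ_iff.1 hij) h
            exact Set.mem_insert _ _
      have hFcF : ∀ n, F ⊆ Fc n := fun n => (seq n).property.1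
      have hkmono : StrictMono k := by
        apply strictMono_nat_of_lt_succ
        intro n
        exact (hfact (n+1)).2.2.2.2.2 (k n) (hkFc n (n+1) (Nat.lt_succ_self n))
      have hkBw : ∀ i j : ℕ, i ≤ j → k j ∈ Bw i := by
        intro i j hij
        rcases hij.lt_or_eq with h | h
        · have : k j ∈ Dc j := (hfact j).2.2.1 (hfact j).2.2.2.2.1
          exact (hfact i).2.1 (hDcmono (i+1) j h this)
        · cases h; exact (hfact i).2.2.2.2.1
      have hbnd0 : bnd 0 = β₀ := rfl
      -- assemble
      refine ⟨fun β => if h : ∃ n : ℕ, β < fn n then Bg (Nat.find h) β else 0,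
        Set.range k, ?_, Set.infinite_range_of_injective hkmono.injective, ?_, ?_⟩
      · rintro _ ⟨n, rfl⟩
        exact (seq n).property.2.2.1 ((hfact n).2.2.1 (hfact n).2.2.2.2.1)
      · intro γ β hγβ hβ
        have hexβ : ∃ n : ℕ, β < fn n := fncof β hβ
        have hexγ : ∃ n : ℕ, γ < fn n := fncof γ (hγβ.trans hβ)
        simp only [dif_pos hexγ, dif_pos hexβ]
        have hfind : Nat.find hexγ ≤ Nat.find hexβ :=
          Nat.find_mono (fun n hn => hγβ.trans hn)
        rcases hfind.lt_or_eq with h | h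
        · have h1 : Bg (Nat.find hexγ) γ ≤ bnd (Nat.find hexγ + 1) :=
            ((hblk (Nat.find hexγ)).2 γ (Nat.find_spec hexγ)).2.1
          have h2 : bnd (Nat.find hexβ) < Bg (Nat.find hexβ) β :=
            ((hblk (Nat.find hexβ)).2 β (Nat.find_spec hexβ)).1
          exact lt_of_le_of_lt (h1.trans (hbndmono _ _ h)) h2
        · rw [h]
          exact (hblk (Nat.find hexβ)).1 γ β hγβ (Nat.find_spec hexβ)
      · intro β hβ
        have hexβ : ∃ n : ℕ, β < fn n := fncof β hβ
        simp only [dif_pos hexβ]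
        set n := Nat.find hexβ with hn
        have hspec : β < fn n := Nat.find_spec hexβ
        obtain ⟨h1, h2, h3, h4, h5⟩ := (hblk n).2 β hspec
        refine ⟨lt_of_le_of_lt ((hbnd0 ▸ hbndmono 0 n (Nat.zero_le n) : β₀ ≤ bnd n)) h1, h3,
          (hFcF n).trans h4, ?_⟩
        rintro _ ⟨j, rfl⟩
        rcases Nat.lt_or_ge j n with hjn | hjn
        · exact h4 (hkFc j n hjn)
        · exact h5 (hkBw n j hjn)

end ST12

/-- For cardinals `κ ≤ 𝔠` of uncountable cofinality and ordinals `α < min(𝔱, cf κ)`,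
the polarised partition relation `(κ; ω) → (κ α; ω ω)` holds. -/
theorem stmt_12 (κ : Cardinal) (hκ : κ ≤ continuum) (hcof : ℵ₀ < κ.ord.cof)
    (α : Ordinal) (hα1 : α < towerNumber) (hα2 : α < (κ.ord.cof).ord)
    (c : κ.ord.ToType → ℕ → Fin 2) :
    (∃ (A : Set κ.ord.ToType) (D : Set ℕ),
      #A = κ ∧ D.Infinite ∧ ∀ a ∈ A, ∀ d ∈ D, c a d = 0) ∨
    (∃ (A : Set κ.ord.ToType) (D : Set ℕ),
      Nonempty (↥A ≃o α.ToType) ∧ D.Infinite ∧ ∀ a ∈ A, ∀ d ∈ D, c a d = 1) := by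
  classical
  have hℵκ : ℵ₀ < κ := lt_of_lt_of_le hcof (Ordinal.cof_ord_le κ)
  set iso := (Ordinal.ToType.mk (o := κ.ord)) with hiso
  set E : Ordinal → Set ℕ := fun b => {n | ∃ h : b < κ.ord, c (iso ⟨b, h⟩) n = 1} with hE
  set X : Set ℕ → ℕ → Set κ.ord.ToType := fun D m => {a | ∀ n ∈ D, m ≤ n → c a n = 0} with hX
  by_cases hcase : ∃ D : Set ℕ, D.Infinite ∧ ∃ m : ℕ, ¬(#(X D m) < κ)
  · left
    obtain ⟨D, hDinf, m, hm⟩ := hcase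
    refine ⟨X D m, D \ Set.Iio m, ?_, hDinf.diff (Set.finite_Iio m), ?_⟩
    · have h1 : #(X D m) ≤ κ := by
        have h2 := Cardinal.mk_set_le (X D m)
        rwa [Cardinal.mk_ord_toType κ] at h2
      exact le_antisymm h1 (not_lt.1 hm)
    · intro a ha d hd
      exact ha d hd.1 (le_of_not_gt (by simpa using hd.2))
  · right
    push_neg at hcase
    have hRR : ST12.Rr κ.ord E ∅ Set.univ := by
      intro D' hsub hinf β hβ
      by_contra hno
      push_neg at hno
      have hcov : Set.Iic (iso ⟨β, hβ⟩) ∪ (⋃ m : ℕ, X D' m) = Set.univ := by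
        apply Set.eq_univ_of_forall
        intro a
        rcases le_or_gt ((iso.symm a : Set.Iio κ.ord) : Ordinal) β with hle | hlt
        · left
          have h1 : (iso.symm a : Set.Iio κ.ord) ≤ ⟨β, hβ⟩ := Subtype.coe_le_coe.1 hle
          have h2 : iso (iso.symm a) ≤ iso ⟨β, hβ⟩ := iso.le_iff_le.2 h1
          rwa [OrderIso.apply_symm_apply] at h2
        · have hbo : ((iso.symm a : Set.Iio κ.ord) : Ordinal) < κ.ord := (iso.symm a).2
          have hfin : (E ((iso.symm a : Set.Iio κ.ord) : Ordinal) ∩ D').Finite := by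
            by_contra hinf2
            exact absurd hbo (not_lt.2 (hno _ ⟨Set.empty_subset _, hinf2⟩ hlt))
          obtain ⟨m0, hm0⟩ := hfin.bddAbove
          refine Or.inr (Set.mem_iUnion.2 ⟨m0 + 1, ?_⟩)
          intro n hn hmn
          by_contra hc0
          have hc1 : c a n = 1 := by
            have hval : (c a n).val ≠ 0 := fun h => hc0 (Fin.ext h)
            have hlt2 : (c a n).val < 2 := (c a n).isLt
            exact Fin.ext (by omega)
          have hnE : n ∈ E ((iso.symm a : Set.Iio κ.ord) : Ordinal) := by
            refine ⟨hbo, ?_⟩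
            have heq : iso ⟨((iso.symm a : Set.Iio κ.ord) : Ordinal), hbo⟩ = a := by
              have : (⟨((iso.symm a : Set.Iio κ.ord) : Ordinal), hbo⟩ : Set.Iio κ.ord) =
                  iso.symm a := Subtype.ext rfl
              rw [this, OrderIso.apply_symm_apply]
            rw [heq]
            exact hc1
          have hle2 : n ≤ m0 := hm0 ⟨hnE, hn⟩
          omega
      have hbound : #(Set.Iic (iso ⟨β, hβ⟩) ∪ ⋃ m : ℕ, X D' m : Set κ.ord.ToType) < κ := by
        refine lt_of_le_of_lt (Cardinal.mk_union_le _ _) (Cardinal.add_lt_of_lt hℵκ.le ?_ ?_)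
        · rw [← Set.Iio_insert]
          refine lt_of_le_of_lt Cardinal.mk_insert_le (Cardinal.add_lt_of_lt hℵκ.le ?_ ?_)
          · exact Cardinal.mk_Iio_ord_toType _
          · exact lt_of_lt_of_le Cardinal.one_lt_aleph0 hℵκ.le
        · have hU := Cardinal.mk_iUnion_le_lift (fun m : ℕ => X D' m)
          simp only [Cardinal.lift_id'] at hU
          rw [Cardinal.mk_nat, Cardinal.lift_aleph0] at hU
          refine lt_of_le_of_lt hU ?_
          have hsup : (⨆ m : ℕ, #(X D' m)) < κ := by
            have hq : (⨆ m : ℕ, (#(X D' m)).ord) < κ.ord :=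
              Ordinal.iSup_lt_ord_lift (c := κ.ord)
                (by rw [Cardinal.mk_nat, Cardinal.lift_aleph0]; exact hcof)
                (fun m => Cardinal.ord_lt_ord.2 (hcase D' hinf m))
            refine lt_of_le_of_lt (ciSup_le' (fun m => ?_)) (Cardinal.lt_ord.1 hq)
            rw [← Cardinal.card_ord (#(X D' m))]
            exact Ordinal.card_le_card (Ordinal.le_iSup (fun m : ℕ => (#(X D' m)).ord) m)
          exact Cardinal.mul_lt_of_lt hℵκ.le hℵκ hsup
      rw [hcov, Cardinal.mk_univ, Cardinal.mk_ord_toType] at hbound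
      exact lt_irrefl κ hbound
    have h0o : (0 : Ordinal) < κ.ord :=
      lt_of_lt_of_le Ordinal.omega0_pos
        (by rw [← Cardinal.ord_aleph0]; exact Cardinal.ord_le_ord.2 hℵκ.le)
    obtain ⟨g, D, hDsub, hDinf, hmono, hprops⟩ :=
      ST12.Pmain (o := κ.ord) (E := E) hcof α hα1 (Cardinal.lt_ord.1 hα2) ∅ Set.univ 0
        Set.finite_empty Set.infinite_univ hRR h0o
    set j : α.ToType → κ.ord.ToType := fun x =>
      iso ⟨g (((Ordinal.ToType.mk (o := α)).symm x : Set.Iio α) : Ordinal),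
        (hprops _ ((Ordinal.ToType.mk (o := α)).symm x).2).2.1⟩ with hj
    have hjmono : StrictMono j := by
      intro x y hxy
      have h1 : (((Ordinal.ToType.mk (o := α)).symm x : Set.Iio α) : Ordinal) <
          (((Ordinal.ToType.mk (o := α)).symm y : Set.Iio α) : Ordinal) :=
        Subtype.coe_lt_coe.2 ((Ordinal.ToType.mk (o := α)).symm.strictMono hxy)
      have h2 := hmono _ _ h1 ((Ordinal.ToType.mk (o := α)).symm y).2
      exact iso.strictMono (Subtype.mk_lt_mk.2 h2)
    refine ⟨Set.range j, D, ⟨(StrictMono.orderIso j hjmono).symm⟩, hDinf, ?_⟩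
    rintro a ⟨x, rfl⟩ d hd
    have hdE : d ∈ E (g (((Ordinal.ToType.mk (o := α)).symm x : Set.Iio α) : Ordinal)) :=
      (hprops _ ((Ordinal.ToType.mk (o := α)).symm x).2).2.2.2 hd
    obtain ⟨hlt, hc1⟩ := hdE
    exact hc1
end

section
/- Let κ be a cardinal of uncountable cofinality, let K be the set of ordinals below the initial ordinal of κ, and let (A_ξ)_{ξ ∈ K} be a family of subsets of ℚ. Then either (a) there exists X ⊆ K with |X| = cf(κ) such that for every finite subset x ⊆ X the intersection ⋂_{ξ ∈ x} A_ξ is dense in ℚ, or (b) there exists Y ⊆ K with |Y| = κ such that ℚ order-embeds into ⋂_{ξ ∈ Y} (ℚ \ A_ξ). -/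
open Cardinal Ordinal

/-- `A ⊆ ℚ` is dense in `ℚ` if every open interval of `ℚ` meets `A`. -/
def DenseIn (A : Set ℚ) : Prop := ∀ p q : ℚ, p < q → ∃ r ∈ A, p < r ∧ r < q

/-- A dense subset of `ℚ` intersected with an open interval contains a copy of `ℚ`. -/
lemma ratEmbed_aux {B : Set ℚ} (hB : DenseIn B) {p q : ℚ} (hpq : p < q)
    {S : Set ℚ} (hS : ∀ r ∈ B, p < r → r < q → r ∈ S) :
    Nonempty (ℚ ↪o ↥S) := by
  let C : Set ℚ := {r | r ∈ B ∧ p < r ∧ r < q}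
  have hCS : C ⊆ S := fun r hr => hS r hr.1 hr.2.1 hr.2.2
  haveI : Nonempty ↥C := by
    obtain ⟨r, hr, h1, h2⟩ := hB p q hpq
    exact ⟨⟨r, hr, h1, h2⟩⟩
  haveI : DenselyOrdered ↥C := ⟨by
    rintro ⟨a, ha⟩ ⟨b, hb⟩ hab
    obtain ⟨r, hr, h1, h2⟩ := hB a b hab
    exact ⟨⟨r, hr, ha.2.1.trans h1, h2.trans hb.2.2⟩, h1, h2⟩⟩
  haveI : NoMinOrder ↥C := ⟨by
    rintro ⟨a, ha⟩
    obtain ⟨r, hr, h1, h2⟩ := hB p a ha.2.1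
    exact ⟨⟨r, hr, h1, h2.trans ha.2.2⟩, h2⟩⟩
  haveI : NoMaxOrder ↥C := ⟨by
    rintro ⟨a, ha⟩
    obtain ⟨r, hr, h1, h2⟩ := hB a q ha.2.2
    exact ⟨⟨r, hr, ha.2.1.trans h1, h2⟩, h1⟩⟩
  obtain ⟨e⟩ := Order.iso_of_countable_dense (α := ℚ) (β := ↥C)
  exact ⟨OrderEmbedding.ofStrictMono (fun x => ⟨(e x : ℚ), hCS (e x).2⟩)
    (fun a b hab => Subtype.mk_lt_mk.2 (Subtype.coe_lt_coe.2 (e.lt_iff_lt.2 hab)))⟩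

/-- A finite subset of the union of a chain of sets lies in one of them. -/
lemma finset_subset_chain_elt {α : Type*} {c : Set (Set α)} (hchain : IsChain (· ⊆ ·) c)
    (x : Finset α) (hne : x.Nonempty) (hx : ↑x ⊆ ⋃₀ c) : ∃ s ∈ c, ↑x ⊆ s := by
  classical
  induction x using Finset.induction_on with
  | empty => exact absurd hne (by simp)
  | @insert a x ha ih =>
    have hax : a ∈ ⋃₀ c := hx (by simp)
    obtain ⟨t, htc, hat⟩ := hax
    rcases x.eq_empty_or_nonempty with rfl | hxne
    · exact ⟨t, htc, by simpa using hat⟩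
    · have hxsub : ↑x ⊆ ⋃₀ c := by
        intro b hb
        apply hx
        simp only [Finset.coe_insert, Set.mem_insert_iff]
        exact Or.inr hb
      obtain ⟨s, hsc, hxs⟩ := ih hxne hxsub
      have key : ∀ u, u ∈ c → a ∈ u → ↑x ⊆ u → ∃ v ∈ c, ↑(insert a x) ⊆ v := by
        intro u huc hau hxu
        refine ⟨u, huc, ?_⟩
        intro b hb
        rcases Set.mem_insert_iff.1 (by rw [Finset.coe_insert] at hb; exact hb) with rfl | hb'
        · exact hau
        · exact hxu hb'
      rcases eq_or_ne s t with rfl | hst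
      · exact key s hsc hat hxs
      · rcases hchain hsc htc hst with h | h
        · exact key t htc hat (hxs.trans h)
        · exact key s hsc (h hat) hxs

theorem stmt_13_aux.{u} (κ : Cardinal.{u}) (hcof : ℵ₀ < κ.ord.cof)
    (A : κ.ord.ToType → Set ℚ) :
    (∃ X : Set κ.ord.ToType, #X = κ.ord.cof ∧
      ∀ x : Finset κ.ord.ToType, ↑x ⊆ X → DenseIn (⋂ ξ ∈ x, A ξ)) ∨
    (∃ Y : Set κ.ord.ToType, #Y = κ ∧
      Nonempty (ℚ ↪o ↥(⋂ ξ ∈ Y, (A ξ)ᶜ))) := by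
  classical
  have hκinf : ℵ₀ ≤ κ := hcof.le.trans (cof_ord_le κ)
  have hK : #(κ.ord.ToType) = κ := by rw [mk_toType, card_ord]
  haveI : Infinite κ.ord.ToType := by rw [Cardinal.infinite_iff, hK]; exact hκinf
  set Good : Set (Set κ.ord.ToType) :=
    {X | ∀ x : Finset κ.ord.ToType, ↑x ⊆ X → DenseIn (⋂ ξ ∈ x, A ξ)} with hGood
  have hdense_univ : DenseIn (Set.univ : Set ℚ) := by
    intro p q hpq
    exact ⟨(p + q) / 2, Set.mem_univ _, by linarith, by linarith⟩
  have hempty : (∅ : Set κ.ord.ToType) ∈ Good := by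
    intro x hx
    have hx0 : x = ∅ := by
      rw [← Finset.coe_eq_empty, ← Set.subset_empty_iff]; exact hx
    subst hx0
    simpa using hdense_univ
  by_cases hcase : ∃ X ∈ Good, κ.ord.cof ≤ #X
  · obtain ⟨X, hXg, hle⟩ := hcase
    obtain ⟨Y, hYX, hYcard⟩ := Cardinal.le_mk_iff_exists_subset.mp hle
    exact Or.inl ⟨Y, hYcard, fun x hx => hXg x (hx.trans hYX)⟩
  push_neg at hcase
  -- Zorn's lemma: a maximal good set
  obtain ⟨M, hM⟩ := zorn_subset Good (by
    intro c hcG hchain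
    refine ⟨⋃₀ c, ?_, fun s hs => Set.subset_sUnion_of_mem hs⟩
    intro x hx
    rcases x.eq_empty_or_nonempty with rfl | hxne
    · simpa using hdense_univ
    · obtain ⟨s, hsc, hxs⟩ := finset_subset_chain_elt hchain x hxne hx
      exact hcG hsc x hxs)
  have hMGood : M ∈ Good := hM.1
  have hMlt : #M < κ.ord.cof := hcase M hMGood
  have hMltK : #M < #(κ.ord.ToType) := by rw [hK]; exact hMlt.trans_le (cof_ord_le κ)
  have hMc : #(↥Mᶜ) = κ := by rw [Cardinal.mk_compl_of_infinite M hMltK, hK]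
  -- for each ξ outside M, adding it destroys density of some finite intersection
  have hP : ∀ ξ : ↥Mᶜ, ∃ (x : Finset κ.ord.ToType) (p q : ℚ), ↑x ⊆ M ∧ p < q ∧
      ∀ r ∈ ⋂ ξ' ∈ x, A ξ', p < r → r < q → r ∉ A ξ.val := by
    rintro ⟨ξ, hξ⟩
    have hnotgood : insert ξ M ∉ Good := by
      intro hg
      exact hξ (hM.2 hg (Set.subset_insert ξ M) (Set.mem_insert ξ M))
    rw [hGood] at hnotgood
    simp only [Set.mem_setOf_eq, not_forall] at hnotgood
    obtain ⟨x0, hx0sub, hx0⟩ := hnotgood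
    have hmem : ξ ∈ x0 := by
      by_contra hnot
      refine hx0 (hMGood x0 ?_)
      intro a ha
      rcases hx0sub ha with rfl | haM
      · exact absurd ha hnot
      · exact haM
    refine ⟨x0.erase ξ, ?_⟩
    rw [DenseIn] at hx0
    push_neg at hx0
    obtain ⟨p, q, hpq, hfail⟩ := hx0
    refine ⟨p, q, ?_, hpq, ?_⟩
    · intro a ha
      have ha' := Finset.mem_erase.1 (by exact_mod_cast ha)
      rcases hx0sub (Finset.mem_coe.2 ha'.2) with h | h
      · exact absurd h ha'.1
      · exact h
    · intro r hr hpr hrq hrA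
      have hrx0 : r ∈ ⋂ ξ' ∈ x0, A ξ' := by
        rw [Set.mem_iInter₂] at hr ⊢
        intro i hi
        rcases eq_or_ne i ξ with rfl | hne
        · exact hrA
        · exact hr i (Finset.mem_erase.2 ⟨hne, hi⟩)
      exact absurd hrq (not_lt.2 (hfail r hrx0 hpr))
  choose xF pF qF hxFsub hpqF hFail using hP
  -- pigeonhole
  let g : ↥Mᶜ → Finset ↥M × ULift.{u} ℚ × ULift.{u} ℚ :=
    fun ξ => ⟨(xF ξ).subtype (· ∈ M), ULift.up (pF ξ), ULift.up (qF ξ)⟩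
  have hcard_cod : #(Finset ↥M × ULift.{u} ℚ × ULift.{u} ℚ) < κ.ord.cof := by
    have h1 : #(Finset ↥M) < κ.ord.cof := by
      rcases finite_or_infinite ↥M with hfin | hinf
      · haveI : Fintype ↥M := Fintype.ofFinite _
        exact (Cardinal.lt_aleph0_of_finite (Finset ↥M)).trans hcof
      · rw [Cardinal.mk_finset_of_infinite]; exact hMlt
    have h2 : #(ULift.{u} ℚ × ULift.{u} ℚ) < κ.ord.cof := by
      have : #(ULift.{u} ℚ × ULift.{u} ℚ) ≤ ℵ₀ := Cardinal.mk_le_aleph0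
      exact this.trans_lt hcof
    have := Cardinal.mul_lt_of_lt hcof.le h1 h2
    simp only [Cardinal.mk_prod, Cardinal.lift_id]
    exact this
  obtain ⟨a, t, htsub, htcard, hconst⟩ :=
    Cardinal.infinite_pigeonhole_set g κ (by rw [hMc]) hκinf hcard_cod
  obtain ⟨xM, p', q'⟩ := a
  have htK : #t = κ := le_antisymm ((Cardinal.mk_set_le t).trans hK.le) htcard
  have htne : t.Nonempty := by
    rcases t.eq_empty_or_nonempty with rfl | h
    · exfalso
      rw [Cardinal.mk_emptyCollection] at htK
      exact (Cardinal.aleph0_pos.trans_le hκinf).ne' htK.symm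
    · exact h
  obtain ⟨ξ₀, hξ₀⟩ := htne
  have hdata : ∀ ξ (hξ : ξ ∈ t),
      xF ⟨ξ, htsub hξ⟩ = xM.map (Function.Embedding.subtype (· ∈ M)) ∧
      pF ⟨ξ, htsub hξ⟩ = p'.down ∧ qF ⟨ξ, htsub hξ⟩ = q'.down := by
    intro ξ hξ
    have h := hconst hξ
    simp only [g, Prod.mk.injEq] at h
    refine ⟨?_, ?_, ?_⟩
    · rw [← h.1, Finset.subtype_map_of_mem (fun a ha => hxFsub ⟨ξ, htsub hξ⟩ ha)]
    · rw [← h.2.1]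
    · rw [← h.2.2]
  have hxbarsub : ↑(xM.map (Function.Embedding.subtype (· ∈ M))) ⊆ M := by
    intro a ha
    rw [Finset.mem_coe, Finset.mem_map] at ha
    obtain ⟨b, _, rfl⟩ := ha
    exact b.2
  have hB : DenseIn (⋂ ξ' ∈ xM.map (Function.Embedding.subtype (· ∈ M)), A ξ') :=
    hMGood _ hxbarsub
  have hpq : p'.down < q'.down := by
    obtain ⟨h1, h2, h3⟩ := hdata ξ₀ hξ₀
    rw [← h2, ← h3]
    exact hpqF _
  refine Or.inr ⟨t, htK, ?_⟩
  apply ratEmbed_aux hB hpq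
  intro r hr h1 h2
  rw [Set.mem_iInter₂]
  intro ξ hξ
  obtain ⟨e1, e2, e3⟩ := hdata ξ hξ
  rw [Set.mem_compl_iff]
  exact hFail ⟨ξ, htsub hξ⟩ r (by rw [e1]; exact hr) (by rw [e2]; exact h1)
    (by rw [e3]; exact h2)

/-- For any cardinal `κ` of uncountable cofinality and any family `(A ξ)` of subsets of
`ℚ` indexed by the ordinals below the initial ordinal of `κ`, either some subfamily of
size `cf κ` is an `ω`-complete `ℚ`-basis, or there is a subfamily of size `κ` of the
complements whose intersection contains a copy of `ℚ`. -/
theorem stmt_13 (κ : Cardinal) (hcof : ℵ₀ < κ.ord.cof)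
    (A : κ.ord.ToType → Set ℚ) :
    (∃ X : Set κ.ord.ToType, #X = κ.ord.cof ∧
      ∀ x : Finset κ.ord.ToType, ↑x ⊆ X → DenseIn (⋂ ξ ∈ x, A ξ)) ∨
    (∃ Y : Set κ.ord.ToType, #Y = κ ∧
      Nonempty (ℚ ↪o ↥(⋂ ξ ∈ Y, (A ξ)ᶜ))) :=
  stmt_13_aux κ hcof A
end
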